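/- For all reals c ≥ 2, a > 0 and μ with 1 ≤ μ ≤ 2, there exists a constant a′ > 0 (depending only on c, a, μ) such that the following holds: for every CSS code C with K ≥ 1, w_X, w_Z, q_X, q_Z ≤ c, n_X ≤ c·N, n_Z ≤ c·N, and d_X·d_Z ≥ a·N^μ, there exists a CSS code C̃ (on some number Ñ of qubits) with K̃ = K, with w̃_X, w̃_Z, q̃_X, q̃_Z all at most c+2, and with min(d̃_X, d̃_Z) ≥ a′·Ñ^{1/(3−μ)}. -/

import Mathlib

open Matrix

/-- The weight of a vector over `F₂`: the number of nonzero entries. -/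
def wt {α : Type*} [Fintype α] (v : α → ZMod 2) : ℕ :=
  (Finset.univ.filter fun j => v j ≠ 0).card

/-- A binary CSS code: matrices `HX ∈ F₂^{nX×N}` and `HZ ∈ F₂^{nZ×N}` with
`HX · HZᵀ = 0`. -/
structure CSSCode where
  N : ℕ
  nX : ℕ
  nZ : ℕ
  HX : Matrix (Fin nX) (Fin N) (ZMod 2)
  HZ : Matrix (Fin nZ) (Fin N) (ZMod 2)
  orth : HX * HZ.transpose = 0

namespace CSSCode

/-- Maximum weight of a row of `HX`. -/
def wX (C : CSSCode) : ℕ := Finset.univ.sup fun i => wt (C.HX i)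

/-- Maximum weight of a row of `HZ`. -/
def wZ (C : CSSCode) : ℕ := Finset.univ.sup fun i => wt (C.HZ i)

/-- Maximum weight of a column of `HX`. -/
def qX (C : CSSCode) : ℕ := Finset.univ.sup fun j => wt fun i => C.HX i j

/-- Maximum weight of a column of `HZ`. -/
def qZ (C : CSSCode) : ℕ := Finset.univ.sup fun j => wt fun i => C.HZ i j

/-- Number of logical qubits, `K = N − rank(H_X) − rank(H_Z)`. -/
noncomputable def K (C : CSSCode) : ℕ := C.N - C.HX.rank - C.HZ.rank

/-- X-distance: the minimum weight of a vector in `ker(HZ)` not lying in the row space of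
`HX`. -/
noncomputable def dX (C : CSSCode) : ℕ :=
  sInf {k | ∃ v : Fin C.N → ZMod 2, C.HZ.mulVec v = 0 ∧
    v ∉ Submodule.span (ZMod 2) (Set.range C.HX) ∧ wt v = k}

/-- Z-distance: the minimum weight of a vector in `ker(HX)` not lying in the row space of
`HZ`. -/
noncomputable def dZ (C : CSSCode) : ℕ :=
  sInf {k | ∃ v : Fin C.N → ZMod 2, C.HX.mulVec v = 0 ∧
    v ∉ Submodule.span (ZMod 2) (Set.range C.HZ) ∧ wt v = k}

end CSSCode


set_option linter.unusedSectionVars false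
namespace Stmt14
abbrev F := ZMod 2

section wt

variable {α β : Type*} [Fintype α] [Fintype β]

lemma wt_eq_sum (v : α → F) : wt v = ∑ a, (if v a ≠ 0 then 1 else 0) := by
  rw [wt, Finset.card_filter]

lemma wt_comp_equiv (e : α ≃ β) (v : β → F) : wt (v ∘ e) = wt v := by
  rw [wt_eq_sum, wt_eq_sum]
  exact Fintype.sum_equiv e _ _ (fun a => rfl)

lemma wt_sum_type (v : α ⊕ β → F) : wt v = wt (v ∘ Sum.inl) + wt (v ∘ Sum.inr) := by
  simp [wt_eq_sum, Fintype.sum_sum_type]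

lemma wt_prod (v : α × β → F) : wt v = ∑ b, wt (fun a => v (a, b)) := by
  simp [wt_eq_sum, Fintype.sum_prod_type_right]

lemma wt_add_le (f g : α → F) : wt (fun a => f a + g a) ≤ wt f + wt g := by
  classical
  rw [wt, wt, wt]
  refine le_trans (Finset.card_le_card ?_) (Finset.card_union_le _ _)
  intro a ha
  simp only [Finset.mem_filter, Finset.mem_univ, true_and, Finset.mem_union] at ha ⊢
  by_contra h
  push_neg at h
  simp [h.1, h.2] at ha

lemma wt_sum_le {s : Finset β} (v : β → α → F) :
    wt (fun a => ∑ b ∈ s, v b a) ≤ ∑ b ∈ s, wt (v b) := by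
  classical
  induction s using Finset.induction_on with
  | empty => simp [wt]
  | insert b s hb ih =>
      rw [Finset.sum_insert hb]
      calc wt (fun a => ∑ x ∈ insert b s, v x a) = wt (fun a => v b a + ∑ x ∈ s, v x a) := by
            congr 1; funext a; rw [Finset.sum_insert hb]
        _ ≤ wt (v b) + wt (fun a => ∑ x ∈ s, v x a) := wt_add_le _ _
        _ ≤ _ := by exact Nat.add_le_add_left ih _

lemma wt_le_card (v : α → F) : wt v ≤ Fintype.card α := by
  rw [wt, ← Finset.card_univ]
  exact Finset.card_le_card (Finset.filter_subset _ _)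

lemma wt_pos_of_ne_zero {v : α → F} (h : v ≠ 0) : 1 ≤ wt v := by
  rcases Function.ne_iff.mp h with ⟨a, ha⟩
  rw [wt, Nat.one_le_iff_ne_zero, ← Nat.pos_iff_ne_zero, Finset.card_pos]
  exact ⟨a, by simp [ha]; exact ha⟩

end wt

section helpers
variable {t : ℕ}

lemma sum_ite_castSucc (g : Fin t → F) (σ : Fin (t+1)) :
    (∑ s : Fin t, if σ = s.castSucc then g s else 0) = Fin.lastCases 0 g σ := by
  induction σ using Fin.lastCases with
  | last =>
      rw [Fin.lastCases_last]
      refine Finset.sum_eq_zero fun s _ => ?_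
      simp [(Fin.castSucc_lt_last s).ne']
  | cast s₀ =>
      rw [Fin.lastCases_castSucc]
      rw [Finset.sum_eq_single s₀]
      · simp
      · intro s _ hs
        rw [if_neg fun h => hs (Fin.castSucc_injective _ h.symm)]
      · simp

lemma sum_ite_succ (g : Fin t → F) (σ : Fin (t+1)) :
    (∑ s : Fin t, if σ = s.succ then g s else 0) = Fin.cases 0 g σ := by
  induction σ using Fin.cases with
  | zero =>
      rw [Fin.cases_zero]
      refine Finset.sum_eq_zero fun s _ => ?_
      simp [(Fin.succ_ne_zero s).symm]
  | succ s₀ =>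
      rw [Fin.cases_succ]
      rw [Finset.sum_eq_single s₀]
      · simp
      · intro s _ hs
        rw [if_neg fun h => hs (Fin.succ_injective _ h.symm)]
      · simp

lemma sum_lastCases (g : Fin t → F) :
    (∑ σ : Fin (t+1), Fin.lastCases 0 g σ) = ∑ s, g s := by
  rw [Fin.sum_univ_castSucc]
  simp

lemma sum_cases (g : Fin t → F) :
    (∑ σ : Fin (t+1), Fin.cases 0 g σ) = ∑ s, g s := by
  rw [Fin.sum_univ_succ]
  simp

end helpers

section construction

variable {ι κX κZ : Type*} [Fintype ι] [Fintype κX] [Fintype κZ]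
  [DecidableEq ι] [DecidableEq κX] [DecidableEq κZ]

variable (HX : Matrix κX ι F) (HZ : Matrix κZ ι F) (t : ℕ)

/-- X-check matrix of the balanced code. -/
def BX : Matrix ((ι × Fin t) ⊕ (κX × Fin (t+1))) ((ι × Fin (t+1)) ⊕ (κZ × Fin t)) F :=
  fun r q =>
    match r, q with
    | .inl (j, s), .inl (j', σ) =>
        if j = j' then ((if σ = s.castSucc then 1 else 0) + (if σ = s.succ then 1 else 0)) else 0
    | .inl (j, s), .inr (i, s') => if s = s' then HZ i j else 0
    | .inr (x, σ), .inl (j, σ') => if σ = σ' then HX x j else 0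
    | .inr _, .inr _ => 0

/-- Z-check matrix of the balanced code. -/
def BZ : Matrix (κZ × Fin (t+1)) ((ι × Fin (t+1)) ⊕ (κZ × Fin t)) F :=
  fun r q =>
    match r, q with
    | (i, σ), .inl (j, σ') => if σ = σ' then HZ i j else 0
    | (i, σ), .inr (i', s) =>
        if i = i' then ((if σ = s.castSucc then 1 else 0) + (if σ = s.succ then 1 else 0)) else 0

variable {HX HZ t}

lemma BZ_mulVec (v : ((ι × Fin (t+1)) ⊕ (κZ × Fin t)) → F) (i : κZ) (σ : Fin (t+1)) :
    (BZ HZ t).mulVec v (i, σ) =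
      HZ.mulVec (fun j => v (.inl (j, σ))) i
      + (Fin.lastCases 0 (fun s => v (.inr (i, s))) σ
      + Fin.cases 0 (fun s => v (.inr (i, s))) σ) := by
  rw [Matrix.mulVec, dotProduct, Fintype.sum_sum_type]
  congr 1
  · rw [Fintype.sum_prod_type, Matrix.mulVec, dotProduct]
    refine Finset.sum_congr rfl fun j _ => ?_
    simp only [BZ, ite_mul, zero_mul]
    rw [Finset.sum_ite_eq]
    simp
  · rw [Fintype.sum_prod_type_right]
    rw [← sum_ite_castSucc (fun s => v (.inr (i, s))) σ, ← sum_ite_succ (fun s => v (.inr (i, s))) σ,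
      ← Finset.sum_add_distrib]
    refine Finset.sum_congr rfl fun s _ => ?_
    simp only [BZ, ite_mul, zero_mul, add_mul, one_mul]
    rw [Finset.sum_ite_eq]
    simp

lemma BX_mulVec_inl (v : ((ι × Fin (t+1)) ⊕ (κZ × Fin t)) → F) (j : ι) (s : Fin t) :
    (BX HX HZ t).mulVec v (.inl (j, s)) =
      (v (.inl (j, s.castSucc)) + v (.inl (j, s.succ)))
      + HZ.transpose.mulVec (fun i => v (.inr (i, s))) j := by
  rw [Matrix.mulVec, dotProduct, Fintype.sum_sum_type]
  congr 1
  · rw [Fintype.sum_prod_type]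
    rw [show ∀ z w : F, z + w = ∑ j' : ι, if j = j' then z + w else 0 by intro z w; rw [Finset.sum_ite_eq]; simp]
    refine Finset.sum_congr rfl fun j' _ => ?_
    simp only [BX, ite_mul, zero_mul, add_mul, one_mul]
    split_ifs with h
    · subst h
      rw [Finset.sum_add_distrib]
      congr 1
      · rw [Finset.sum_ite_eq']
        simp
      · rw [Finset.sum_ite_eq']
        simp
    · exact Finset.sum_eq_zero fun σ _ => rfl
  · rw [Fintype.sum_prod_type, Matrix.mulVec, dotProduct]
    refine Finset.sum_congr rfl fun i _ => ?_
    simp only [BX, ite_mul, zero_mul]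
    rw [Finset.sum_ite_eq]
    simp [Matrix.transpose_apply]

lemma BX_mulVec_inr (v : ((ι × Fin (t+1)) ⊕ (κZ × Fin t)) → F) (x : κX) (σ : Fin (t+1)) :
    (BX HX HZ t).mulVec v (.inr (x, σ)) =
      HX.mulVec (fun j => v (.inl (j, σ))) x := by
  rw [Matrix.mulVec, dotProduct, Fintype.sum_sum_type]
  have h2 : (∑ p : κZ × Fin t, (BX HX HZ t) (.inr (x, σ)) (.inr p) * v (.inr p)) = 0 :=
    Finset.sum_eq_zero fun p _ => by rcases p with ⟨i, s⟩; simp [BX]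
  rw [h2, add_zero, Fintype.sum_prod_type, Matrix.mulVec, dotProduct]
  refine Finset.sum_congr rfl fun j _ => ?_
  simp only [BX, ite_mul, zero_mul]
  rw [Finset.sum_ite_eq]
  simp

end construction
section construction2

variable {ι κX κZ : Type*} [Fintype ι] [Fintype κX] [Fintype κZ]
  [DecidableEq ι] [DecidableEq κX] [DecidableEq κZ]
variable {HX : Matrix κX ι F} {HZ : Matrix κZ ι F} {t : ℕ}

lemma BXt_mulVec_inl (Y : ((ι × Fin t) ⊕ (κX × Fin (t+1))) → F) (j : ι) (σ : Fin (t+1)) :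
    (BX HX HZ t).transpose.mulVec Y (.inl (j, σ)) =
      (Fin.lastCases 0 (fun s => Y (.inl (j, s))) σ + Fin.cases 0 (fun s => Y (.inl (j, s))) σ)
      + HX.transpose.mulVec (fun x => Y (.inr (x, σ))) j := by
  rw [Matrix.mulVec, dotProduct, Fintype.sum_sum_type]
  congr 1
  · rw [Fintype.sum_prod_type_right,
      ← sum_ite_castSucc (fun s => Y (.inl (j, s))) σ, ← sum_ite_succ (fun s => Y (.inl (j, s))) σ,
      ← Finset.sum_add_distrib]
    refine Finset.sum_congr rfl fun s _ => ?_
    simp only [Matrix.transpose_apply, BX, ite_mul, zero_mul, add_mul, one_mul]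
    rw [Finset.sum_ite_eq']
    simp
  · rw [Fintype.sum_prod_type, Matrix.mulVec, dotProduct]
    refine Finset.sum_congr rfl fun x _ => ?_
    simp only [Matrix.transpose_apply, BX, ite_mul, zero_mul]
    rw [Finset.sum_ite_eq']
    simp

lemma BXt_mulVec_inr (Y : ((ι × Fin t) ⊕ (κX × Fin (t+1))) → F) (i : κZ) (s : Fin t) :
    (BX HX HZ t).transpose.mulVec Y (.inr (i, s)) =
      HZ.mulVec (fun j => Y (.inl (j, s))) i := by
  rw [Matrix.mulVec, dotProduct, Fintype.sum_sum_type]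
  have h2 : (∑ p : κX × Fin (t+1), (BX HX HZ t).transpose (.inr (i, s)) (.inr p) * Y (.inr p)) = 0 :=
    Finset.sum_eq_zero fun p _ => by rcases p with ⟨x, σ⟩; simp [BX]
  rw [h2, add_zero, Fintype.sum_prod_type, Matrix.mulVec, dotProduct]
  refine Finset.sum_congr rfl fun j _ => ?_
  simp only [Matrix.transpose_apply, BX, ite_mul, zero_mul]
  rw [Finset.sum_ite_eq']
  simp

lemma BZt_mulVec_inl (Y : (κZ × Fin (t+1)) → F) (j : ι) (σ : Fin (t+1)) :
    (BZ HZ t).transpose.mulVec Y (.inl (j, σ)) =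
      HZ.transpose.mulVec (fun i => Y (i, σ)) j := by
  rw [Matrix.mulVec, dotProduct, Fintype.sum_prod_type, Matrix.mulVec, dotProduct]
  refine Finset.sum_congr rfl fun i _ => ?_
  simp only [Matrix.transpose_apply, BZ, ite_mul, zero_mul]
  rw [Finset.sum_ite_eq']
  simp

lemma BZt_mulVec_inr (Y : (κZ × Fin (t+1)) → F) (i : κZ) (s : Fin t) :
    (BZ HZ t).transpose.mulVec Y (.inr (i, s)) = Y (i, s.castSucc) + Y (i, s.succ) := by
  rw [Matrix.mulVec, dotProduct, Fintype.sum_prod_type]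
  rw [Finset.sum_eq_single i]
  · simp only [Matrix.transpose_apply, BZ, ite_mul, zero_mul, add_mul, one_mul, if_pos rfl,
      eq_self_iff_true, if_true]
    rw [Finset.sum_add_distrib, Finset.sum_ite_eq', Finset.sum_ite_eq']
    simp
  · intro i' _ hi'
    refine Finset.sum_eq_zero fun σ _ => ?_
    simp only [Matrix.transpose_apply, BZ]
    rw [if_neg (fun h => hi' h), zero_mul]
  · simp

lemma B_orth (horth : HX * HZ.transpose = 0) :
    (BX HX HZ t) * (BZ HZ t).transpose = 0 := by
  ext r p
  rcases p with ⟨i, σ⟩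
  rw [Matrix.mul_apply, Matrix.zero_apply]
  rcases r with ⟨j, s⟩ | ⟨x, σ₀⟩
  · rw [Fintype.sum_sum_type]
    have h1 : (∑ p : ι × Fin (t+1), BX HX HZ t (.inl (j, s)) (.inl p) * (BZ HZ t).transpose (.inl p) (i, σ))
        = (if σ = s.castSucc then HZ i j else 0) + (if σ = s.succ then HZ i j else 0) := by
      rw [Fintype.sum_prod_type, Finset.sum_eq_single j]
      · simp only [BX, BZ, Matrix.transpose_apply, if_pos rfl, add_mul, ite_mul, zero_mul, one_mul,
          eq_self_iff_true, if_true]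
        rw [Finset.sum_add_distrib, Finset.sum_ite_eq', Finset.sum_ite_eq']
        simp
      · intro j' _ hj'
        refine Finset.sum_eq_zero fun σ' _ => ?_
        simp only [BX]
        rw [if_neg (fun h => hj' h.symm), zero_mul]
      · simp
    have h2 : (∑ p : κZ × Fin t, BX HX HZ t (.inl (j, s)) (.inr p) * (BZ HZ t).transpose (.inr p) (i, σ))
        = (if σ = s.castSucc then HZ i j else 0) + (if σ = s.succ then HZ i j else 0) := by
      rw [Fintype.sum_prod_type, Finset.sum_eq_single i]
      · rw [Finset.sum_eq_single s]
        · simp only [BX, BZ, Matrix.transpose_apply, if_pos rfl, mul_add, mul_ite, mul_one, mul_zero]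
          rfl
        · intro s' _ hs'
          simp only [BX]
          rw [if_neg (fun h => hs' h.symm), zero_mul]
        · simp
      · intro i' _ hi'
        refine Finset.sum_eq_zero fun s' _ => ?_
        simp only [BZ, Matrix.transpose_apply]
        rw [if_neg (fun h => hi' h.symm), mul_zero]
      · simp
    rw [h1, h2, CharTwo.add_self_eq_zero]
  · rw [Fintype.sum_sum_type]
    have h2 : (∑ p : κZ × Fin t, BX HX HZ t (.inr (x, σ₀)) (.inr p) * (BZ HZ t).transpose (.inr p) (i, σ))
        = 0 := Finset.sum_eq_zero fun p _ => by rcases p with ⟨i', s'⟩; simp [BX]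
    rw [h2, add_zero, Fintype.sum_prod_type_right, Finset.sum_eq_single σ₀]
    · have : (∑ j : ι, BX HX HZ t (.inr (x, σ₀)) (.inl (j, σ₀)) * (BZ HZ t).transpose (.inl (j, σ₀)) (i, σ))
          = (if σ = σ₀ then (HX * HZ.transpose) x i else 0) := by
        rw [Matrix.mul_apply]
        split_ifs with h
        · refine Finset.sum_congr rfl fun j _ => ?_
          simp [BX, BZ, h]
        · refine Finset.sum_eq_zero fun j _ => ?_
          simp only [BX, BZ, Matrix.transpose_apply, if_pos rfl]
          rw [if_neg (fun hh => h hh), mul_zero]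
      rw [this, horth]
      simp
    · intro σ' _ hσ'
      refine Finset.sum_eq_zero fun j _ => ?_
      simp only [BX]
      rw [if_neg (fun h => hσ' h.symm), zero_mul]
    · simp

end construction2
section distances

lemma F2.add_eq_zero_iff {a b : F} : a + b = 0 ↔ a = b := by revert a b; decide

lemma F2.eq_add_of_add_eq {a b c : F} (h : a + b = c) : a = c + b := by
  revert a b c; decide

lemma mem_span_range_iff {m n : Type*} [Fintype m] [Fintype n] (M : Matrix m n F) (v : n → F) :
    v ∈ Submodule.span F (Set.range M) ↔ ∃ y : m → F, M.transpose.mulVec y = v := by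
  have h := Matrix.range_mulVecLin M.transpose
  rw [Matrix.col, Matrix.transpose_transpose] at h
  rw [← h]
  constructor
  · rintro ⟨y, rfl⟩
    exact ⟨y, rfl⟩
  · rintro ⟨y, rfl⟩
    exact ⟨y, rfl⟩

variable {t : ℕ}

lemma fin_Iic_zero : Finset.Iic (0 : Fin (t+1)) = {0} := by
  ext x; simp [Fin.le_zero_iff]

lemma fin_Iic_last : Finset.Iic (Fin.last t) = Finset.univ := by
  ext x; simp [Fin.le_last]

lemma fin_succ_not_mem_Iic_castSucc (s : Fin t) :
    s.succ ∉ Finset.Iic (s.castSucc : Fin (t+1)) := by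
  simp [Fin.castSucc_lt_succ (i := s)]

lemma fin_Iic_succ (s : Fin t) :
    Finset.Iic (s.succ : Fin (t+1)) = insert s.succ (Finset.Iic s.castSucc) := by
  ext x
  simp only [Finset.mem_Iic, Finset.mem_insert]
  constructor
  · intro h
    rcases eq_or_lt_of_le h with h' | h'
    · exact Or.inl h'
    · exact Or.inr (Fin.le_castSucc_iff.mpr h')
  · rintro (rfl | h)
    · exact le_refl _
    · exact le_of_lt (Fin.le_castSucc_iff.mp h)

lemma ite_le_castSucc_add_succ (s' : Fin t) (σ : Fin (t+1)) (g : F) :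
    ((if s'.castSucc ≤ σ then g else 0) + (if s'.succ ≤ σ then g else 0))
      = if σ = s'.castSucc then g else 0 := by
  rcases lt_trichotomy σ s'.castSucc with h | h | h
  · rw [if_neg (not_le.mpr h), if_neg (not_le.mpr (lt_of_lt_of_le h (Fin.castSucc_le_succ s'))),
      if_neg (ne_of_lt h), add_zero]
  · rw [if_pos (le_of_eq h.symm), if_neg, if_pos h, add_zero]
    rw [h]
    simp [Fin.succ_le_castSucc_iff]
  · rw [if_pos (le_of_lt h), if_pos, if_neg (ne_of_gt h), CharTwo.add_self_eq_zero]
    rwa [← Fin.castSucc_lt_iff_succ_le]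

variable {ι κX κZ : Type*} [Fintype ι] [Fintype κX] [Fintype κZ]
  [DecidableEq ι] [DecidableEq κX] [DecidableEq κZ]
variable {HX : Matrix κX ι F} {HZ : Matrix κZ ι F}

/-- Main lemma for the X-distance of the balanced code. -/
lemma lemA (v : ((ι × Fin (t+1)) ⊕ (κZ × Fin t)) → F)
    (hv : (BZ HZ t).mulVec v = 0)
    (hns : v ∉ Submodule.span F (Set.range (BX HX HZ t))) :
    ∃ x : ι → F, HZ.mulVec x = 0 ∧ x ∉ Submodule.span F (Set.range HX) ∧ wt x ≤ wt v := by
  set x : ι → F := fun j => ∑ σ : Fin (t+1), v (.inl (j, σ)) with hx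
  have hrow : ∀ (i : κZ) (σ : Fin (t+1)),
      HZ.mulVec (fun j => v (.inl (j, σ))) i
        = Fin.lastCases 0 (fun s => v (.inr (i, s))) σ + Fin.cases 0 (fun s => v (.inr (i, s))) σ := by
    intro i σ
    have h := congrFun hv (i, σ)
    rw [BZ_mulVec, Pi.zero_apply] at h
    exact F2.add_eq_zero_iff.mp h
  refine ⟨x, ?_, ?_, ?_⟩
  · funext i
    have h1 : HZ.mulVec x i = ∑ σ : Fin (t+1), HZ.mulVec (fun j => v (.inl (j, σ))) i := by
      simp only [Matrix.mulVec, dotProduct, hx, Finset.mul_sum]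
      rw [Finset.sum_comm]
    rw [h1, Finset.sum_congr rfl fun σ _ => hrow i σ, Finset.sum_add_distrib,
      sum_lastCases, sum_cases, CharTwo.add_self_eq_zero, Pi.zero_apply]
  · -- x ∉ span: else v ∈ span (BX)
    intro hxs
    apply hns
    rw [mem_span_range_iff] at hxs ⊢
    obtain ⟨y, hy⟩ := hxs
    set P : ι → Fin (t+1) → F := fun j σ => ∑ σ' ∈ Finset.Iic σ, v (.inl (j, σ')) with hP
    refine ⟨Sum.elim (fun p => P p.1 p.2.castSucc)
      (fun q => if q.2 = Fin.last t then y q.1 else 0), ?_⟩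
    funext q
    rcases q with ⟨j, σ⟩ | ⟨i, s⟩
    · rw [BXt_mulVec_inl]
      simp only [Sum.elim_inl, Sum.elim_inr]
      have hthird : HX.transpose.mulVec (fun x' => if σ = Fin.last t then y x' else 0) j
          = (if σ = Fin.last t then x j else 0) := by
        split_ifs with h
        · exact congrFun hy j
        · simp [Matrix.mulVec, dotProduct]
      rw [hthird]
      have hCS : Fin.cases (0 : F) (fun s => P j s.castSucc) σ + v (.inl (j, σ)) = P j σ := by
        induction σ using Fin.cases with
        | zero =>
            rw [Fin.cases_zero, zero_add, hP]
            simp only []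
            rw [fin_Iic_zero, Finset.sum_singleton]
        | succ s =>
            rw [Fin.cases_succ, hP]
            simp only []
            rw [fin_Iic_succ, Finset.sum_insert (fin_succ_not_mem_Iic_castSucc s)]
            exact add_comm _ _
      have hLC : Fin.lastCases (0 : F) (fun s => P j s.castSucc) σ + (if σ = Fin.last t then x j else 0) = P j σ := by
        induction σ using Fin.lastCases with
        | last =>
            rw [Fin.lastCases_last, if_pos rfl, zero_add, hP, hx]
            simp only []
            rw [fin_Iic_last]
        | cast s =>
            rw [Fin.lastCases_castSucc, if_neg (Fin.castSucc_lt_last s).ne, add_zero]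
      have hfin : ∀ LC CS T P0 vv : F, CS + vv = P0 → LC + T = P0 → (LC + CS) + T = vv := by
        decide
      exact hfin _ _ _ _ _ hCS hLC
    · rw [BXt_mulVec_inr]
      simp only [Sum.elim_inl]
      have h1 : HZ.mulVec (fun j => P j s.castSucc) i
          = ∑ σ ∈ Finset.Iic (s.castSucc : Fin (t+1)), HZ.mulVec (fun j => v (.inl (j, σ))) i := by
        simp only [Matrix.mulVec, dotProduct, hP, Finset.mul_sum]
        rw [Finset.sum_comm]
      rw [h1, Finset.sum_congr rfl fun σ _ => hrow i σ]
      -- ∑_{σ ∈ Iic τ} (lastCases + cases) = lastCases τ, at τ = s.castSucc gives v (inr (i,s))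
      have key : ∀ τ : Fin (t+1), (∑ σ ∈ Finset.Iic τ,
          ((Fin.lastCases (0:F) (fun s' => v (.inr (i, s'))) σ : F)
            + (Fin.cases (0:F) (fun s' => v (.inr (i, s'))) σ : F)))
          = (Fin.lastCases (0:F) (fun s' => v (.inr (i, s'))) τ : F) := by
        intro τ
        have e1 : ∀ σ : Fin (t+1), (Fin.lastCases (0:F) (fun s' => v (.inr (i, s'))) σ : F)
            = ∑ s' : Fin t, if σ = s'.castSucc then v (.inr (i, s')) else 0 :=
          fun σ => (sum_ite_castSucc _ σ).symm
        have e2 : ∀ σ : Fin (t+1), (Fin.cases (0:F) (fun s' => v (.inr (i, s'))) σ : F)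
            = ∑ s' : Fin t, if σ = s'.succ then v (.inr (i, s')) else 0 :=
          fun σ => (sum_ite_succ _ σ).symm
        rw [Finset.sum_congr rfl fun σ _ => by rw [e1 σ, e2 σ, ← Finset.sum_add_distrib]]
        rw [Finset.sum_comm, ← sum_ite_castSucc (fun s' => v (.inr (i, s'))) τ]
        refine Finset.sum_congr rfl fun s' _ => ?_
        rw [Finset.sum_add_distrib, Finset.sum_ite_eq' (Finset.Iic τ), Finset.sum_ite_eq' (Finset.Iic τ)]
        simp only [Finset.mem_Iic]
        exact ite_le_castSucc_add_succ s' τ _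
      rw [key, Fin.lastCases_castSucc]
  · -- weight bound
    calc wt x ≤ ∑ σ : Fin (t+1), wt (fun j => v (.inl (j, σ))) := by
          rw [hx]
          exact wt_sum_le (fun σ j => v (.inl (j, σ)))
      _ = wt (fun p : ι × Fin (t+1) => v (.inl p)) := (wt_prod (fun p : ι × Fin (t+1) => v (.inl p))).symm
      _ ≤ wt v := by rw [wt_sum_type v]; exact Nat.le_add_right _ _

end distances

section distancesB

variable {t : ℕ}
variable {ι κX κZ : Type*} [Fintype ι] [Fintype κX] [Fintype κZ]
  [DecidableEq ι] [DecidableEq κX] [DecidableEq κZ]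
variable {HX : Matrix κX ι F} {HZ : Matrix κZ ι F}

lemma F2.rearrange1 {a b c : F} (h : (a + b) + c = 0) : b = a + c := by
  revert a b c; decide

lemma F2.rearrange2 {a b c : F} (h : a + b = c) : b = a + c := by
  revert a b c; decide

lemma F2.rearrange3 {a b c : F} : ((a+b)+(a+c)) = b + c := by
  revert a b c; decide

lemma F2.rearrange4 {a b c : F} (h : a = b + c) : b = a + c := by
  revert a b c; decide

lemma F2.rearrange5 (A B : F) : B = A + (A + B) := by revert A B; decide

lemma F2.rearrange6 (A B : F) : (A + (A + B)) + B = 0 := by revert A B; decide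

lemma ite_succ_le_pair (s' s : Fin t) (g : F) :
    ((if s'.succ ≤ (s.castSucc : Fin (t+1)) then g else 0)
      + (if s'.succ ≤ (s.succ : Fin (t+1)) then g else 0))
      = if s' = s then g else 0 := by
  simp only [Fin.succ_le_castSucc_iff, Fin.succ_le_succ_iff]
  rcases lt_trichotomy s' s with h | h | h
  · rw [if_pos h, if_pos h.le, if_neg (ne_of_lt h), CharTwo.add_self_eq_zero]
  · subst h
    rw [if_neg (lt_irrefl s'), if_pos le_rfl, if_pos rfl, zero_add]
  · rw [if_neg (not_lt.mpr h.le), if_neg (not_le.mpr h), if_neg (ne_of_gt h), zero_add]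

lemma rec_w {v : ((ι × Fin (t+1)) ⊕ (κZ × Fin t)) → F}
    (hv : (BX HX HZ t).mulVec v = 0) (s : Fin t) (j : ι) :
    v (.inl (j, s.succ)) = v (.inl (j, s.castSucc))
      + HZ.transpose.mulVec (fun i => v (.inr (i, s))) j := by
  have h := congrFun hv (.inl (j, s))
  rw [BX_mulVec_inl, Pi.zero_apply] at h
  exact F2.rearrange1 h

lemma lemB (v : ((ι × Fin (t+1)) ⊕ (κZ × Fin t)) → F)
    (hv : (BX HX HZ t).mulVec v = 0)
    (hns : v ∉ Submodule.span F (Set.range (BZ HZ t))) :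
    (∀ σ : Fin (t+1), HX.mulVec (fun j => v (.inl (j, σ))) = 0
      ∧ (fun j => v (.inl (j, σ))) ∉ Submodule.span F (Set.range HZ))
    ∧ ∑ σ : Fin (t+1), wt (fun j => v (.inl (j, σ))) ≤ wt v := by
  have hker : ∀ σ : Fin (t+1), HX.mulVec (fun j => v (.inl (j, σ))) = 0 := by
    intro σ
    funext x
    have h := congrFun hv (.inr (x, σ))
    rw [BX_mulVec_inr] at h
    exact h
  have hstep : ∀ s : Fin t, (fun j => v (.inl (j, s.succ)))
      = (fun j => v (.inl (j, s.castSucc))) + HZ.transpose.mulVec (fun i => v (.inr (i, s))) :=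
    fun s => funext fun j => rec_w hv s j
  have h0 : (fun j => v (.inl (j, 0))) ∉ Submodule.span F (Set.range HZ) := by
    intro h0
    apply hns
    rw [mem_span_range_iff] at h0 ⊢
    obtain ⟨y₀, hy₀⟩ := h0
    set Y : κZ × Fin (t+1) → F :=
      fun p => y₀ p.1 + ∑ s : Fin t, if s.succ ≤ p.2 then v (.inr (p.1, s)) else 0 with hYdef
    have hY0 : ∀ i, Y (i, 0) = y₀ i := by
      intro i
      rw [hYdef]
      simp [Fin.le_zero_iff, Fin.succ_ne_zero]
    have hYdiff : ∀ (i : κZ) (s : Fin t), Y (i, s.castSucc) + Y (i, s.succ) = v (.inr (i, s)) := by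
      intro i s
      rw [hYdef]
      simp only []
      rw [F2.rearrange3, ← Finset.sum_add_distrib,
        Finset.sum_congr rfl fun s' _ => ite_succ_le_pair s' s (v (.inr (i, s'))),
        Finset.sum_ite_eq' Finset.univ s (fun s' => v (.inr (i, s')))]
      simp
    have hw : ∀ σ : Fin (t+1), HZ.transpose.mulVec (fun i => Y (i, σ)) = (fun j => v (.inl (j, σ))) := by
      intro σ
      induction σ using Fin.induction with
      | zero =>
          have : (fun i => Y (i, 0)) = y₀ := funext hY0
          rw [this, hy₀]
      | succ s ih =>
          have hYs : (fun i => Y (i, s.succ))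
              = (fun i => Y (i, s.castSucc)) + (fun i => v (.inr (i, s))) := by
            funext i
            exact F2.rearrange2 (hYdiff i s)
          rw [hYs, Matrix.mulVec_add, ih, hstep s]
    refine ⟨Y, ?_⟩
    funext q
    rcases q with ⟨j, σ⟩ | ⟨i, s⟩
    · rw [BZt_mulVec_inl]
      exact congrFun (hw σ) j
    · rw [BZt_mulVec_inr]
      exact hYdiff i s
  refine ⟨fun σ => ⟨hker σ, ?_⟩, ?_⟩
  · induction σ using Fin.induction with
    | zero => exact h0
    | succ s ih =>
        intro hmem
        apply ih
        have : (fun j => v (.inl (j, s.castSucc)))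
            = (fun j => v (.inl (j, s.succ))) + HZ.transpose.mulVec (fun i => v (.inr (i, s))) := by
          funext j
          rw [Pi.add_apply]
          exact F2.rearrange4 (rec_w hv s j)
        rw [this]
        exact Submodule.add_mem _ hmem (mem_span_range_iff HZ _ |>.mpr ⟨(fun i => v (.inr (i, s))), rfl⟩)
  · calc ∑ σ : Fin (t+1), wt (fun j => v (.inl (j, σ)))
        = wt (fun p : ι × Fin (t+1) => v (.inl p)) := (wt_prod (fun p : ι × Fin (t+1) => v (.inl p))).symm
      _ ≤ wt v := by rw [wt_sum_type v]; exact Nat.le_add_right _ _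

end distancesB

section ranks

variable {t : ℕ}
variable {ι κX κZ : Type*} [Fintype ι] [Fintype κX] [Fintype κZ]
  [DecidableEq ι] [DecidableEq κX] [DecidableEq κZ]
variable {HX : Matrix κX ι F} {HZ : Matrix κZ ι F}

open Module

lemma kerBZt_const {Y : κZ × Fin (t+1) → F} (hY : (BZ HZ t).transpose.mulVec Y = 0)
    (i : κZ) (σ : Fin (t+1)) : Y (i, σ) = Y (i, 0) := by
  induction σ using Fin.induction with
  | zero => rfl
  | succ s ih =>
      have h := congrFun hY (.inr (i, s))
      rw [BZt_mulVec_inr, Pi.zero_apply] at h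
      rw [← (F2.add_eq_zero_iff.mp h), ih]

noncomputable def eZfwd (HZ : Matrix κZ ι F) (t : ℕ) :
    (LinearMap.ker HZ.transpose.mulVecLin) →ₗ[F] (LinearMap.ker (BZ HZ t).transpose.mulVecLin) :=
  LinearMap.codRestrict _
    ((LinearMap.funLeft F F (Prod.fst : κZ × Fin (t+1) → κZ)).comp
      (LinearMap.ker HZ.transpose.mulVecLin).subtype)
    (by
      rintro ⟨ζ, hζ⟩
      rw [LinearMap.mem_ker] at hζ ⊢
      rw [Matrix.mulVecLin_apply] at hζ ⊢
      funext q
      rcases q with ⟨j, σ⟩ | ⟨i, s⟩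
      · rw [BZt_mulVec_inl]
        exact congrFun hζ j
      · rw [BZt_mulVec_inr]
        exact CharTwo.add_self_eq_zero _)

lemma eZ_bij : Function.Bijective (eZfwd (κZ := κZ) (ι := ι) HZ t) := by
  constructor
  · rintro ⟨ζ, hζ⟩ ⟨ζ', hζ'⟩ h
    have h' := congrArg Subtype.val h
    ext i
    exact congrFun h' (i, 0)
  · rintro ⟨Y, hY⟩
    rw [LinearMap.mem_ker, Matrix.mulVecLin_apply] at hY
    have hmem : (fun i => Y (i, 0)) ∈ LinearMap.ker HZ.transpose.mulVecLin := by
      rw [LinearMap.mem_ker, Matrix.mulVecLin_apply]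
      funext j
      have h := congrFun hY (.inl (j, 0))
      rw [BZt_mulVec_inl] at h
      exact h
    refine ⟨⟨fun i => Y (i, 0), hmem⟩, ?_⟩
    apply Subtype.ext
    funext p
    exact (kerBZt_const hY p.1 p.2).symm

lemma rank_BZ_eq : (BZ HZ t).rank + Fintype.card κZ = Fintype.card κZ * (t+1) + HZ.rank := by
  have hker : finrank F (LinearMap.ker (BZ HZ t).transpose.mulVecLin)
      = finrank F (LinearMap.ker HZ.transpose.mulVecLin) :=
    (LinearEquiv.finrank_eq (LinearEquiv.ofBijective _ eZ_bij)).symm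
  have e1 := LinearMap.finrank_range_add_finrank_ker ((BZ HZ t).transpose.mulVecLin)
  have e2 := LinearMap.finrank_range_add_finrank_ker (HZ.transpose.mulVecLin)
  rw [Module.finrank_pi] at e1 e2
  have hr1 : (BZ HZ t).transpose.rank = finrank F (LinearMap.range (BZ HZ t).transpose.mulVecLin) := rfl
  have hr2 : HZ.transpose.rank = finrank F (LinearMap.range HZ.transpose.mulVecLin) := rfl
  have ht1 : (BZ HZ t).transpose.rank = (BZ HZ t).rank := Matrix.rank_transpose _
  have ht2 : HZ.transpose.rank = HZ.rank := Matrix.rank_transpose _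
  rw [Fintype.card_prod, Fintype.card_fin] at e1
  omega

/-- Extension of `b` to a kernel element of `BX`. -/
noncomputable def G0 (HX : Matrix κX ι F) (HZ : Matrix κZ ι F) (t : ℕ) (b : κZ × Fin t → F) :
    ((ι × Fin (t+1)) ⊕ (κZ × Fin t)) → F :=
  Sum.elim (fun p => HZ.transpose.mulVec (fun i => ∑ s : Fin t, if s.succ ≤ p.2 then b (i, s) else 0) p.1) b

lemma G0_mem (horth : HX * HZ.transpose = 0) (b : κZ × Fin t → F) :
    (BX HX HZ t).mulVec (G0 HX HZ t b) = 0 := by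
  funext r
  rcases r with ⟨j, s⟩ | ⟨x, σ⟩
  · rw [BX_mulVec_inl, Pi.zero_apply]
    have hdiff : (fun i => ∑ s' : Fin t, if s'.succ ≤ (s.succ : Fin (t+1)) then b (i, s') else 0)
        = (fun i => ∑ s' : Fin t, if s'.succ ≤ (s.castSucc : Fin (t+1)) then b (i, s') else 0)
          + (fun i => b (i, s)) := by
      funext i
      rw [Pi.add_apply]
      have hbs : b (i, s) = ∑ s' : Fin t, if s' = s then b (i, s') else 0 := by
        rw [Finset.sum_ite_eq' Finset.univ s (fun s' => b (i, s'))]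
        simp
      rw [hbs, ← Finset.sum_add_distrib]
      refine Finset.sum_congr rfl fun s' _ => ?_
      rw [← ite_succ_le_pair s' s (b (i, s'))]
      exact F2.rearrange5 _ _
    have e1 : G0 HX HZ t b (.inl (j, s.succ))
        = G0 HX HZ t b (.inl (j, s.castSucc)) + HZ.transpose.mulVec (fun i => b (i, s)) j := by
      simp only [G0, Sum.elim_inl]
      rw [hdiff, Matrix.mulVec_add, Pi.add_apply]
    have e2 : (fun i => G0 HX HZ t b (.inr (i, s))) = (fun i => b (i, s)) := rfl
    rw [e2, e1]
    exact F2.rearrange6 _ _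
  · rw [BX_mulVec_inr, Pi.zero_apply]
    have : (fun j => G0 HX HZ t b (.inl (j, σ)))
        = HZ.transpose.mulVec (fun i => ∑ s : Fin t, if s.succ ≤ σ then b (i, s) else 0) := rfl
    rw [this, Matrix.mulVec_mulVec, horth, Matrix.zero_mulVec, Pi.zero_apply]

/-- In-kernel-of-`BX` vanishing of the `inr`-part plus vanishing of `w⁰` forces zero on `inl`. -/
lemma kerBX_inl_const {v : ((ι × Fin (t+1)) ⊕ (κZ × Fin t)) → F}
    (hv : (BX HX HZ t).mulVec v = 0) (hb : ∀ p : κZ × Fin t, v (.inr p) = 0)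
    (j : ι) (σ : Fin (t+1)) : v (.inl (j, σ)) = v (.inl (j, 0)) := by
  induction σ using Fin.induction with
  | zero => rfl
  | succ s ih =>
      rw [rec_w hv s j, ih]
      have : (fun i => v (.inr (i, s))) = (fun _ => (0:F)) := funext fun i => hb (i, s)
      rw [this]
      have hz : HZ.transpose.mulVec (fun _ => (0:F)) j = 0 := by
        simp [Matrix.mulVec, dotProduct]
      rw [hz, add_zero]

noncomputable def piX (HX : Matrix κX ι F) (HZ : Matrix κZ ι F) (t : ℕ) :
    (LinearMap.ker (BX HX HZ t).mulVecLin) →ₗ[F] ((κZ × Fin t) → F) :=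
  (LinearMap.funLeft F F Sum.inr).comp (LinearMap.ker (BX HX HZ t).mulVecLin).subtype

lemma piX_surj (horth : HX * HZ.transpose = 0) : Function.Surjective (piX HX HZ t) := by
  intro b
  refine ⟨⟨G0 HX HZ t b, ?_⟩, rfl⟩
  rw [LinearMap.mem_ker, Matrix.mulVecLin_apply]
  exact G0_mem horth b

noncomputable def eXfwd (HX : Matrix κX ι F) (HZ : Matrix κZ ι F) (t : ℕ) :
    (LinearMap.ker (piX HX HZ t)) →ₗ[F] (LinearMap.ker HX.mulVecLin) :=
  LinearMap.codRestrict _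
    ((LinearMap.funLeft F F (fun j => (Sum.inl (j, (0 : Fin (t+1)))))).comp
      ((LinearMap.ker (BX HX HZ t).mulVecLin).subtype.comp (LinearMap.ker (piX HX HZ t)).subtype))
    (by
      rintro ⟨⟨v, hv⟩, hπ⟩
      rw [LinearMap.mem_ker, Matrix.mulVecLin_apply] at hv ⊢
      funext x
      have h := congrFun hv (.inr (x, 0))
      rw [BX_mulVec_inr] at h
      exact h)

lemma eX_bij : Function.Bijective (eXfwd HX HZ t) := by
  constructor
  · rintro ⟨⟨v, hv⟩, hπ⟩ ⟨⟨v', hv'⟩, hπ'⟩ h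
    rw [LinearMap.mem_ker] at hπ hπ'
    have hb : ∀ p : κZ × Fin t, v (.inr p) = 0 := fun p => congrFun hπ p
    have hb' : ∀ p : κZ × Fin t, v' (.inr p) = 0 := fun p => congrFun hπ' p
    rw [LinearMap.mem_ker, Matrix.mulVecLin_apply] at hv hv'
    have h' : (fun j => v (.inl (j, (0 : Fin (t+1))))) = (fun j => v' (.inl (j, (0 : Fin (t+1))))) :=
      congrArg Subtype.val h
    apply Subtype.ext
    apply Subtype.ext
    funext q
    rcases q with ⟨j, σ⟩ | p
    · show v (Sum.inl (j, σ)) = v' (Sum.inl (j, σ))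
      rw [kerBX_inl_const hv hb j σ, kerBX_inl_const hv' hb' j σ]
      exact congrFun h' j
    · show v (Sum.inr p) = v' (Sum.inr p)
      rw [hb p, hb' p]
  · rintro ⟨x, hx⟩
    rw [LinearMap.mem_ker, Matrix.mulVecLin_apply] at hx
    have hmem : (Sum.elim (fun p : ι × Fin (t+1) => x p.1) (0 : κZ × Fin t → F))
        ∈ LinearMap.ker (BX HX HZ t).mulVecLin := by
      rw [LinearMap.mem_ker, Matrix.mulVecLin_apply]
      funext r
      rcases r with ⟨j, s⟩ | ⟨x', σ⟩
      · rw [BX_mulVec_inl, Pi.zero_apply]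
        simp only [Sum.elim_inl, Sum.elim_inr]
        have hz : HZ.transpose.mulVec (fun i => (0 : κZ × Fin t → F) (i, s)) j = 0 := by
          simp [Matrix.mulVec, dotProduct]
        rw [hz, add_zero, CharTwo.add_self_eq_zero]
      · rw [BX_mulVec_inr, Pi.zero_apply]
        exact congrFun hx x'
    refine ⟨⟨⟨_, hmem⟩, ?_⟩, ?_⟩
    · rw [LinearMap.mem_ker]
      rfl
    · apply Subtype.ext
      rfl

lemma rank_BX_eq (horth : HX * HZ.transpose = 0) :
    (BX HX HZ t).rank + Fintype.card ι + Fintype.card κZ * t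
      = Fintype.card ι * (t+1) + Fintype.card κZ * t + HX.rank := by
  have hkerpi : finrank F (LinearMap.ker (piX HX HZ t)) = finrank F (LinearMap.ker HX.mulVecLin) :=
    LinearEquiv.finrank_eq (LinearEquiv.ofBijective _ eX_bij)
  have hrange : LinearMap.range (piX HX HZ t) = ⊤ := LinearMap.range_eq_top.mpr (piX_surj horth)
  have e0 := LinearMap.finrank_range_add_finrank_ker (piX HX HZ t)
  rw [hrange, finrank_top, Module.finrank_pi, hkerpi] at e0
  -- e0 : card (κZ × Fin t) + finrank ker HX = finrank ker BX
  have e1 := LinearMap.finrank_range_add_finrank_ker ((BX HX HZ t).mulVecLin)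
  have e2 := LinearMap.finrank_range_add_finrank_ker (HX.mulVecLin)
  rw [Module.finrank_pi] at e1 e2
  have hr1 : (BX HX HZ t).rank = finrank F (LinearMap.range (BX HX HZ t).mulVecLin) := rfl
  have hr2 : HX.rank = finrank F (LinearMap.range HX.mulVecLin) := rfl
  rw [Fintype.card_sum, Fintype.card_prod, Fintype.card_prod, Fintype.card_fin, Fintype.card_fin] at e1
  rw [Fintype.card_prod, Fintype.card_fin] at e0
  omega

end ranks

section weights

variable {t : ℕ}

lemma ite_eq_comm {γ : Type*} [DecidableEq γ] (a b : γ) (x : F) :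
    (if a = b then x else 0) = (if b = a then x else 0) := by
  split_ifs with h1 h2 h2 <;> first | rfl | (exact absurd h1.symm h2) | (exact absurd h2.symm h1)

lemma wt_zero' {α : Type*} [Fintype α] : wt (fun _ : α => (0:F)) = 0 := by simp [wt]

lemma wt_fiber {α β : Type*} [Fintype α] [Fintype β] [DecidableEq β] (f : α → F) (s : β) :
    wt (fun p : α × β => if p.2 = s then f p.1 else 0) = wt f := by
  rw [wt_prod (fun p : α × β => if p.2 = s then f p.1 else 0)]
  have h : ∀ b : β, wt (fun a : α => if b = s then f a else 0) = if b = s then wt f else 0 := by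
    intro b
    split_ifs with hb
    · rfl
    · simp [wt]
  rw [Finset.sum_congr rfl fun b _ => h b, Finset.sum_ite_eq' Finset.univ s (fun _ => wt f)]
  simp

lemma wt_single {α : Type*} [Fintype α] [DecidableEq α] (j : α) (c : F) :
    wt (fun a => if a = j then c else 0) ≤ 1 := by
  rw [wt]
  refine le_trans (Finset.card_le_card (fun r hr => ?_)) (by simp : ({j} : Finset α).card ≤ 1)
  simp only [Finset.mem_filter, Finset.mem_singleton] at hr ⊢
  by_contra hne
  simp [hne] at hr

lemma wt_single' {α : Type*} [Fintype α] [DecidableEq α] (j : α) (c : F) :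
    wt (fun a => if j = a then c else 0) ≤ 1 := by
  have h : (fun a => if j = a then c else 0) = (fun a => if a = j then c else 0) :=
    funext fun a => ite_eq_comm j a c
  rw [h]
  exact wt_single j c

lemma sum_ite_nat_le_one {e : Fin t → Fin (t+1)} (he : Function.Injective e) (σ : Fin (t+1)) :
    (∑ s : Fin t, if σ = e s then (1:ℕ) else 0) ≤ 1 := by
  rw [← Finset.card_filter]
  exact Finset.card_le_one.mpr (fun a ha b hb =>
    he (((Finset.mem_filter.mp ha).2).symm.trans (Finset.mem_filter.mp hb).2))

lemma wt_ite_pair_le {α : Type*} [Fintype α] [DecidableEq α] (j : α)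
    (c1 c2 : Prop) [Decidable c1] [Decidable c2] :
    wt (fun a : α => if j = a then ((if c1 then (1:F) else 0) + (if c2 then 1 else 0)) else 0)
      ≤ (if c1 then (1:ℕ) else 0) + (if c2 then 1 else 0) := by
  by_cases h1 : c1 <;> by_cases h2 : c2
  · exact le_trans (wt_single' j _) (by rw [if_pos h1, if_pos h2]; omega)
  · exact le_trans (wt_single' j _) (by rw [if_pos h1, if_neg h2])
  · exact le_trans (wt_single' j _) (by rw [if_neg h1, if_pos h2])
  · have h : (fun a : α => if j = a then ((if c1 then (1:F) else 0) + (if c2 then 1 else 0)) else 0)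
        = fun _ : α => (0:F) := by
      funext a
      rw [if_neg h1, if_neg h2, add_zero]
      split_ifs <;> rfl
    rw [h, wt_zero']
    exact Nat.zero_le _

/-- Block with conditions on the `Fin t` component via `castSucc`/`succ` of the summation var. -/
lemma wt_pair_block {α : Type*} [Fintype α] [DecidableEq α] (j : α) (σ : Fin (t+1)) :
    wt (fun p : α × Fin t =>
      if j = p.1 then ((if σ = p.2.castSucc then (1:F) else 0) + (if σ = p.2.succ then 1 else 0)) else 0)
      ≤ 2 := by
  rw [wt_prod]
  calc (∑ s : Fin t, wt (fun a : α =>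
        if j = a then ((if σ = s.castSucc then (1:F) else 0) + (if σ = s.succ then 1 else 0)) else 0))
      ≤ ∑ s : Fin t, ((if σ = s.castSucc then (1:ℕ) else 0) + (if σ = s.succ then 1 else 0)) :=
        Finset.sum_le_sum fun s _ => wt_ite_pair_le j _ _
    _ = (∑ s : Fin t, if σ = s.castSucc then (1:ℕ) else 0)
        + (∑ s : Fin t, if σ = s.succ then (1:ℕ) else 0) := Finset.sum_add_distrib
    _ ≤ 1 + 1 := add_le_add
        (sum_ite_nat_le_one (Fin.castSucc_injective t) σ)
        (sum_ite_nat_le_one (Fin.succ_injective t) σ)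

lemma wt_pair_block' {α : Type*} [Fintype α] [DecidableEq α] (j : α) (s : Fin t) :
    wt (fun p : α × Fin (t+1) =>
      if j = p.1 then ((if p.2 = s.castSucc then (1:F) else 0) + (if p.2 = s.succ then 1 else 0)) else 0)
      ≤ 2 := by
  rw [wt_prod]
  calc (∑ σ : Fin (t+1), wt (fun a : α =>
        if j = a then ((if σ = s.castSucc then (1:F) else 0) + (if σ = s.succ then 1 else 0)) else 0))
      ≤ ∑ σ : Fin (t+1), ((if σ = s.castSucc then (1:ℕ) else 0) + (if σ = s.succ then 1 else 0)) :=
        Finset.sum_le_sum fun σ _ => wt_ite_pair_le j _ _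
    _ = (∑ σ : Fin (t+1), if σ = s.castSucc then (1:ℕ) else 0)
        + (∑ σ : Fin (t+1), if σ = s.succ then (1:ℕ) else 0) := Finset.sum_add_distrib
    _ ≤ 1 + 1 := by
        rw [Finset.sum_ite_eq' Finset.univ (s.castSucc) (fun _ => (1:ℕ)),
          Finset.sum_ite_eq' Finset.univ (s.succ) (fun _ => (1:ℕ))]
        simp

variable {ι κX κZ : Type*} [Fintype ι] [Fintype κX] [Fintype κZ]
  [DecidableEq ι] [DecidableEq κX] [DecidableEq κZ]
variable {HX : Matrix κX ι F} {HZ : Matrix κZ ι F}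

lemma wt_BX_row_inl (j : ι) (s : Fin t) :
    wt (BX HX HZ t (.inl (j, s))) ≤ wt (fun i => HZ i j) + 2 := by
  rw [wt_sum_type (BX HX HZ t (.inl (j, s))), add_comm]
  have h1 : wt ((BX HX HZ t (.inl (j, s))) ∘ Sum.inl) ≤ 2 := by
    have heq : ((BX HX HZ t (.inl (j, s))) ∘ Sum.inl)
        = fun p : ι × Fin (t+1) =>
          if j = p.1 then ((if p.2 = s.castSucc then (1:F) else 0) + (if p.2 = s.succ then 1 else 0)) else 0 := by
      funext p; rcases p with ⟨j', σ⟩; rfl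
    rw [heq]
    exact wt_pair_block' j s
  have h2 : wt ((BX HX HZ t (.inl (j, s))) ∘ Sum.inr) = wt (fun i => HZ i j) := by
    have heq : ((BX HX HZ t (.inl (j, s))) ∘ Sum.inr)
        = fun p : κZ × Fin t => if p.2 = s then HZ p.1 j else 0 := by
      funext p; rcases p with ⟨i, s'⟩
      exact ite_eq_comm s s' _
    rw [heq]
    exact wt_fiber (fun i => HZ i j) s
  omega

lemma wt_BX_row_inr (x : κX) (σ : Fin (t+1)) :
    wt (BX HX HZ t (.inr (x, σ))) ≤ wt (HX x) := by
  rw [wt_sum_type (BX HX HZ t (.inr (x, σ)))]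
  have h2 : wt ((BX HX HZ t (.inr (x, σ))) ∘ Sum.inr) = 0 := by
    have heq : ((BX HX HZ t (.inr (x, σ))) ∘ Sum.inr) = fun _ : κZ × Fin t => (0:F) := by
      funext p; rcases p with ⟨i, s⟩; rfl
    rw [heq, wt_zero']
  have h1 : wt ((BX HX HZ t (.inr (x, σ))) ∘ Sum.inl) = wt (HX x) := by
    have heq : ((BX HX HZ t (.inr (x, σ))) ∘ Sum.inl)
        = fun p : ι × Fin (t+1) => if p.2 = σ then HX x p.1 else 0 := by
      funext p; rcases p with ⟨j, σ'⟩
      exact ite_eq_comm σ σ' _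
    rw [heq]
    exact wt_fiber (fun j' => HX x j') σ
  omega

lemma wt_BZ_row (i : κZ) (σ : Fin (t+1)) :
    wt (BZ HZ t (i, σ)) ≤ wt (HZ i) + 2 := by
  rw [wt_sum_type (BZ HZ t (i, σ)), add_comm]
  have h1 : wt ((BZ HZ t (i, σ)) ∘ Sum.inl) = wt (HZ i) := by
    have heq : ((BZ HZ t (i, σ)) ∘ Sum.inl)
        = fun p : ι × Fin (t+1) => if p.2 = σ then HZ i p.1 else 0 := by
      funext p; rcases p with ⟨j, σ'⟩
      exact ite_eq_comm σ σ' _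
    rw [heq]
    exact wt_fiber (fun j' => HZ i j') σ
  have h2 : wt ((BZ HZ t (i, σ)) ∘ Sum.inr) ≤ 2 := by
    have heq : ((BZ HZ t (i, σ)) ∘ Sum.inr)
        = fun p : κZ × Fin t =>
          if i = p.1 then ((if σ = p.2.castSucc then (1:F) else 0) + (if σ = p.2.succ then 1 else 0)) else 0 := by
      funext p; rcases p with ⟨i', s⟩; rfl
    rw [heq]
    exact wt_pair_block i σ
  omega

lemma wt_BX_col_inl (j : ι) (σ : Fin (t+1)) :
    wt (fun r => BX HX HZ t r (.inl (j, σ))) ≤ wt (fun x => HX x j) + 2 := by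
  rw [wt_sum_type (fun r => BX HX HZ t r (.inl (j, σ))), add_comm]
  have h1 : wt ((fun r => BX HX HZ t r (.inl (j, σ))) ∘ Sum.inl) ≤ 2 := by
    have heq : ((fun r => BX HX HZ t r (.inl (j, σ))) ∘ Sum.inl)
        = fun p : ι × Fin t =>
          if j = p.1 then ((if σ = p.2.castSucc then (1:F) else 0) + (if σ = p.2.succ then 1 else 0)) else 0 := by
      funext p; rcases p with ⟨j', s⟩
      show (if j' = j then _ else 0) = _
      rw [ite_eq_comm]
    rw [heq]
    exact wt_pair_block j σ
  have h2 : wt ((fun r => BX HX HZ t r (.inl (j, σ))) ∘ Sum.inr) = wt (fun x => HX x j) := by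
    have heq : ((fun r => BX HX HZ t r (.inl (j, σ))) ∘ Sum.inr)
        = fun p : κX × Fin (t+1) => if p.2 = σ then HX p.1 j else 0 := by
      funext p; rcases p with ⟨x, σ'⟩; rfl
    rw [heq]
    exact wt_fiber (fun x' => HX x' j) σ
  omega

lemma wt_BX_col_inr (i : κZ) (s : Fin t) :
    wt (fun r => BX HX HZ t r (.inr (i, s))) ≤ wt (HZ i) := by
  rw [wt_sum_type (fun r => BX HX HZ t r (.inr (i, s)))]
  have h2 : wt ((fun r => BX HX HZ t r (.inr (i, s))) ∘ Sum.inr) = 0 := by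
    have heq : ((fun r => BX HX HZ t r (.inr (i, s))) ∘ Sum.inr) = fun _ : κX × Fin (t+1) => (0:F) := by
      funext p; rcases p with ⟨x, σ⟩; rfl
    rw [heq, wt_zero']
  have h1 : wt ((fun r => BX HX HZ t r (.inr (i, s))) ∘ Sum.inl) = wt (HZ i) := by
    have heq : ((fun r => BX HX HZ t r (.inr (i, s))) ∘ Sum.inl)
        = fun p : ι × Fin t => if p.2 = s then HZ i p.1 else 0 := by
      funext p; rcases p with ⟨j, s'⟩; rfl
    rw [heq]
    exact wt_fiber (fun j' => HZ i j') s
  omega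

lemma wt_BZ_col_inl (j : ι) (σ : Fin (t+1)) :
    wt (fun p : κZ × Fin (t+1) => BZ HZ t p (.inl (j, σ))) ≤ wt (fun i => HZ i j) := by
  have heq : (fun p : κZ × Fin (t+1) => BZ HZ t p (.inl (j, σ)))
      = fun p : κZ × Fin (t+1) => if p.2 = σ then HZ p.1 j else 0 := by
    funext p; rcases p with ⟨i, σ'⟩; rfl
  rw [heq]
  exact le_of_eq (wt_fiber (fun i' => HZ i' j) σ)

lemma wt_BZ_col_inr (i : κZ) (s : Fin t) :
    wt (fun p : κZ × Fin (t+1) => BZ HZ t p (.inr (i, s))) ≤ 2 := by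
  have heq : (fun p : κZ × Fin (t+1) => BZ HZ t p (.inr (i, s)))
      = fun p : κZ × Fin (t+1) =>
        if i = p.1 then ((if p.2 = s.castSucc then (1:F) else 0) + (if p.2 = s.succ then 1 else 0)) else 0 := by
    funext p; rcases p with ⟨i', σ⟩
    show (if i' = i then _ else 0) = _
    rw [ite_eq_comm]
  rw [heq]
  exact wt_pair_block' i s

end weights

section nonempty

variable {ι m1 m2 : Type*} [Fintype ι] [Fintype m1] [Fintype m2] [DecidableEq ι]

open Module

lemma exists_logical (A : Matrix m1 ι F) (B : Matrix m2 ι F) (horth : A * B.transpose = 0)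
    (hrank : A.rank + B.rank < Fintype.card ι) :
    ∃ v : ι → F, A.mulVec v = 0 ∧ v ∉ Submodule.span F (Set.range B) := by
  by_contra h
  push_neg at h
  have hle : LinearMap.ker A.mulVecLin ≤ Submodule.span F (Set.range B) := by
    intro v hv
    rw [LinearMap.mem_ker, Matrix.mulVecLin_apply] at hv
    exact h v hv
  have hge : Submodule.span F (Set.range B) ≤ LinearMap.ker A.mulVecLin := by
    rw [Submodule.span_le]
    rintro _ ⟨i, rfl⟩
    rw [SetLike.mem_coe, LinearMap.mem_ker, Matrix.mulVecLin_apply]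
    funext x
    have hc := congrFun (congrFun horth x) i
    rw [Matrix.mul_apply, Matrix.zero_apply] at hc
    simp only [Pi.zero_apply]
    rw [Matrix.mulVec, dotProduct, ← hc]
    exact Finset.sum_congr rfl fun j _ => rfl
  have heq : LinearMap.ker A.mulVecLin = Submodule.span F (Set.range B) := le_antisymm hle hge
  have h1 := LinearMap.finrank_range_add_finrank_ker (A.mulVecLin)
  rw [Module.finrank_pi, heq] at h1
  have h2 : finrank F (Submodule.span F (Set.range B)) = B.rank := by
    have hr := Matrix.range_mulVecLin B.transpose
    rw [Matrix.col, Matrix.transpose_transpose] at hr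
    rw [← hr]
    exact (Matrix.rank_transpose B) ▸ rfl
  rw [h2] at h1
  have h3 : A.rank = finrank F (LinearMap.range A.mulVecLin) := rfl
  omega

end nonempty

section transport

open Module

lemma rank_submatrix_equiv {l m n o : Type*} [Fintype l] [Fintype m] [Fintype n] [Fintype o]
    (A : Matrix m n F) (e₁ : l ≃ m) (e₂ : o ≃ n) : (A.submatrix e₁ e₂).rank = A.rank := by
  rw [Matrix.rank, Matrix.rank, Matrix.mulVecLin_submatrix, LinearMap.range_comp,
    LinearMap.range_comp,
    show LinearMap.funLeft F F (⇑e₂.symm) = (LinearEquiv.funCongrLeft F F e₂.symm).toLinearMap from rfl,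
    LinearEquiv.range, Submodule.map_top,
    show LinearMap.funLeft F F (⇑e₁) = (LinearEquiv.funCongrLeft F F e₁).toLinearMap from rfl]
  exact LinearEquiv.finrank_map_eq _ _

lemma sup_comp_equiv {α β : Type*} [Fintype α] [Fintype β] [DecidableEq β] (e : α ≃ β) (f : β → ℕ) :
    (Finset.univ.sup fun a => f (e a)) = Finset.univ.sup f := by
  apply le_antisymm
  · exact Finset.sup_le fun a _ => Finset.le_sup (Finset.mem_univ (e a))
  · refine Finset.sup_le fun b _ => ?_
    have h : f b = f (e (e.symm b)) := by simp
    rw [h]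
    exact Finset.le_sup (f := fun a => f (e a)) (Finset.mem_univ (e.symm b))


lemma submatrix_mulVec_comp {γ δ γ' δ' : Type*} [Fintype γ] [Fintype δ] [Fintype γ'] [Fintype δ']
    (M : Matrix γ δ F) (f : γ' → γ) (eC : δ' ≃ δ) (v : δ' → F) :
    (M.submatrix f ⇑eC).mulVec v = (M.mulVec (v ∘ ⇑eC.symm)) ∘ f := by
  funext r
  rw [Function.comp_apply, Matrix.mulVec, Matrix.mulVec, dotProduct, dotProduct]
  refine Fintype.sum_equiv eC _ _ fun q => ?_
  simp [Matrix.submatrix_apply]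

lemma submatrix_mulVec_zero_iff {γ δ γ' δ' : Type*} [Fintype γ] [Fintype δ] [Fintype γ'] [Fintype δ']
    (M : Matrix γ δ F) (eR : γ' ≃ γ) (eC : δ ≃ δ') (v : δ' → F) :
    (M.submatrix ⇑eR ⇑eC.symm).mulVec v = 0 ↔ M.mulVec (v ∘ ⇑eC) = 0 := by
  rw [submatrix_mulVec_comp M (⇑eR) eC.symm v]
  simp only [Equiv.symm_symm]
  constructor
  · intro h
    funext g
    have := congrFun h (eR.symm g)
    simpa using this
  · intro h
    rw [h]
    rfl

lemma submatrix_span_iff {γ δ γ' δ' : Type*} [Fintype γ] [Fintype δ] [Fintype γ'] [Fintype δ']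
    (M : Matrix γ δ F) (eR : γ' ≃ γ) (eC : δ ≃ δ') (v : δ' → F) :
    v ∈ Submodule.span F (Set.range (M.submatrix ⇑eR ⇑eC.symm)) ↔
      (v ∘ ⇑eC) ∈ Submodule.span F (Set.range M) := by
  rw [mem_span_range_iff, mem_span_range_iff]
  constructor
  · rintro ⟨y, hy⟩
    refine ⟨y ∘ ⇑eR.symm, ?_⟩
    rw [Matrix.transpose_submatrix] at hy
    rw [submatrix_mulVec_comp M.transpose (⇑eC.symm) eR y] at hy
    funext d
    have := congrFun hy (eC d)
    simpa using this
  · rintro ⟨y, hy⟩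
    refine ⟨y ∘ ⇑eR, ?_⟩
    rw [Matrix.transpose_submatrix, submatrix_mulVec_comp M.transpose (⇑eC.symm) eR (y ∘ ⇑eR)]
    have h1 : (y ∘ ⇑eR) ∘ ⇑eR.symm = y := by funext g; simp
    rw [h1, hy]
    funext d
    simp

lemma comp_equiv_eq_iff {α β γ : Type*} (e : α ≃ β) (f : β → γ) (g : α → γ) :
    f ∘ e = g ↔ f = g ∘ e.symm := by
  constructor
  · intro h; funext b
    have := congrFun h (e.symm b)
    simpa using this
  · intro h; funext a
    have := congrFun h (e a)
    simpa using this

end transport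

end Stmt14

namespace CSSCode

open Stmt14

variable (C : CSSCode) (t : ℕ)

/-- Qubit reindexing equivalence. -/
def eQ : ((Fin C.N × Fin (t+1)) ⊕ (Fin C.nZ × Fin t)) ≃ Fin (C.N * (t+1) + C.nZ * t) :=
  (Equiv.sumCongr finProdFinEquiv finProdFinEquiv).trans finSumFinEquiv

def eRX : ((Fin C.N × Fin t) ⊕ (Fin C.nX × Fin (t+1))) ≃ Fin (C.N * t + C.nX * (t+1)) :=
  (Equiv.sumCongr finProdFinEquiv finProdFinEquiv).trans finSumFinEquiv

def eRZ : (Fin C.nZ × Fin (t+1)) ≃ Fin (C.nZ * (t+1)) := finProdFinEquiv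

/-- The distance-balanced code. -/
noncomputable def balance : CSSCode where
  N := C.N * (t+1) + C.nZ * t
  nX := C.N * t + C.nX * (t+1)
  nZ := C.nZ * (t+1)
  HX := (BX C.HX C.HZ t).submatrix (eRX C t).symm (eQ C t).symm
  HZ := (BZ C.HZ t).submatrix (eRZ C t).symm (eQ C t).symm
  orth := by
    rw [Matrix.transpose_submatrix, Matrix.submatrix_mul_equiv, B_orth C.orth]
    ext i j
    simp

lemma balance_N : (balance C t).N = C.N * (t+1) + C.nZ * t := rfl

lemma balance_K : (balance C t).K = C.K := by
  have hrx : (balance C t).HX.rank = (BX C.HX C.HZ t).rank := rank_submatrix_equiv _ _ _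
  have hrz : (balance C t).HZ.rank = (BZ C.HZ t).rank := rank_submatrix_equiv _ _ _
  have h1 := rank_BX_eq (t := t) C.orth
  have h2 := rank_BZ_eq (HZ := C.HZ) (t := t)
  simp only [Fintype.card_fin] at h1 h2
  have hle : C.HX.rank ≤ C.N := Matrix.rank_le_width C.HX
  rw [CSSCode.K, CSSCode.K, hrx, hrz, balance_N]
  have ex1 : C.N * (t+1) = C.N * t + C.N := by ring
  have ex2 : C.nZ * (t+1) = C.nZ * t + C.nZ := by ring
  omega

lemma balance_wX : (balance C t).wX ≤ max (C.qZ + 2) C.wX := by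
  refine Finset.sup_le fun r _ => ?_
  have hrow : (balance C t).HX r = (BX C.HX C.HZ t ((eRX C t).symm r)) ∘ ⇑(eQ C t).symm := rfl
  erw [hrow, wt_comp_equiv (eQ C t).symm]
  rcases h : (eRX C t).symm r with ⟨j, s⟩ | ⟨x, σ⟩
  · refine le_trans (wt_BX_row_inl j s) (le_max_of_le_left ?_)
    have : wt (fun i => C.HZ i j) ≤ C.qZ := by
      rw [CSSCode.qZ]
      exact Finset.le_sup (f := fun j => wt fun i => C.HZ i j) (Finset.mem_univ j)
    omega
  · refine le_trans (wt_BX_row_inr x σ) (le_max_of_le_right ?_)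
    rw [CSSCode.wX]
    exact Finset.le_sup (f := fun i => wt (C.HX i)) (Finset.mem_univ x)

lemma balance_wZ : (balance C t).wZ ≤ C.wZ + 2 := by
  refine Finset.sup_le fun r _ => ?_
  have hrow : (balance C t).HZ r = (BZ C.HZ t ((eRZ C t).symm r)) ∘ ⇑(eQ C t).symm := rfl
  erw [hrow, wt_comp_equiv (eQ C t).symm]
  rcases h : (eRZ C t).symm r with ⟨i, σ⟩
  refine le_trans (wt_BZ_row i σ) ?_
  have : wt (C.HZ i) ≤ C.wZ := by
    rw [CSSCode.wZ]
    exact Finset.le_sup (f := fun i => wt (C.HZ i)) (Finset.mem_univ i)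
  omega

lemma balance_qX : (balance C t).qX ≤ max (C.qX + 2) C.wZ := by
  refine Finset.sup_le fun q _ => ?_
  have hcol : (fun r => (balance C t).HX r q)
      = (fun r' => BX C.HX C.HZ t r' ((eQ C t).symm q)) ∘ ⇑(eRX C t).symm := rfl
  erw [hcol, wt_comp_equiv (eRX C t).symm]
  rcases h : (eQ C t).symm q with ⟨j, σ⟩ | ⟨i, s⟩
  · refine le_trans (wt_BX_col_inl j σ) (le_max_of_le_left ?_)
    have : wt (fun x => C.HX x j) ≤ C.qX := by
      rw [CSSCode.qX]
      exact Finset.le_sup (f := fun j => wt fun x => C.HX x j) (Finset.mem_univ j)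
    omega
  · refine le_trans (wt_BX_col_inr i s) (le_max_of_le_right ?_)
    rw [CSSCode.wZ]
    exact Finset.le_sup (f := fun i => wt (C.HZ i)) (Finset.mem_univ i)

lemma balance_qZ : (balance C t).qZ ≤ max C.qZ 2 := by
  refine Finset.sup_le fun q _ => ?_
  have hcol : (fun r => (balance C t).HZ r q)
      = (fun p => BZ C.HZ t p ((eQ C t).symm q)) ∘ ⇑(eRZ C t).symm := rfl
  erw [hcol, wt_comp_equiv (eRZ C t).symm]
  rcases h : (eQ C t).symm q with ⟨j, σ⟩ | ⟨i, s⟩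
  · refine le_trans (wt_BZ_col_inl j σ) (le_max_of_le_left ?_)
    rw [CSSCode.qZ]
    exact Finset.le_sup (f := fun j => wt fun i => C.HZ i j) (Finset.mem_univ j)
  · exact le_trans (wt_BZ_col_inr i s) (le_max_of_le_right le_rfl)

/-- The defining set for `dX` of the balanced code equals the abstract one. -/
lemma balance_dX_set :
    {k | ∃ v : Fin (balance C t).N → F, (balance C t).HZ.mulVec v = 0 ∧
      v ∉ Submodule.span F (Set.range (balance C t).HX) ∧ wt v = k}
    = {k | ∃ u : ((Fin C.N × Fin (t+1)) ⊕ (Fin C.nZ × Fin t)) → F,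
        (BZ C.HZ t).mulVec u = 0 ∧ u ∉ Submodule.span F (Set.range (BX C.HX C.HZ t)) ∧ wt u = k} := by
  have hmv : ∀ v : Fin (C.N * (t+1) + C.nZ * t) → F,
      ((balance C t).HZ.mulVec v = 0 ↔ (BZ C.HZ t).mulVec (v ∘ ⇑(eQ C t)) = 0) :=
    fun v => submatrix_mulVec_zero_iff (BZ C.HZ t) (eRZ C t).symm (eQ C t) v
  have hsp : ∀ v : Fin (C.N * (t+1) + C.nZ * t) → F,
      (v ∈ Submodule.span F (Set.range (balance C t).HX) ↔
        (v ∘ ⇑(eQ C t)) ∈ Submodule.span F (Set.range (BX C.HX C.HZ t))) :=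
    fun v => submatrix_span_iff (BX C.HX C.HZ t) (eRX C t).symm (eQ C t) v
  ext k
  simp only [Set.mem_setOf_eq]
  constructor
  · rintro ⟨v, h1, h2, h3⟩
    exact ⟨v ∘ ⇑(eQ C t), (hmv v).mp h1, fun hmem => h2 ((hsp v).mpr hmem),
      by rw [← h3]; exact wt_comp_equiv (eQ C t) v⟩
  · rintro ⟨u, h1, h2, h3⟩
    refine ⟨u ∘ ⇑(eQ C t).symm, ?_, ?_, ?_⟩
    · erw [hmv]
      have he : (u ∘ ⇑(eQ C t).symm) ∘ ⇑(eQ C t) = u := by funext p; simp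
      erw [he]; exact h1
    · erw [hsp]
      have he : (u ∘ ⇑(eQ C t).symm) ∘ ⇑(eQ C t) = u := by funext p; simp
      erw [he]; exact h2
    · rw [← h3]; exact wt_comp_equiv (eQ C t).symm u

lemma balance_dZ_set :
    {k | ∃ v : Fin (balance C t).N → F, (balance C t).HX.mulVec v = 0 ∧
      v ∉ Submodule.span F (Set.range (balance C t).HZ) ∧ wt v = k}
    = {k | ∃ u : ((Fin C.N × Fin (t+1)) ⊕ (Fin C.nZ × Fin t)) → F,
        (BX C.HX C.HZ t).mulVec u = 0 ∧ u ∉ Submodule.span F (Set.range (BZ C.HZ t)) ∧ wt u = k} := by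
  have hmv : ∀ v : Fin (C.N * (t+1) + C.nZ * t) → F,
      ((balance C t).HX.mulVec v = 0 ↔ (BX C.HX C.HZ t).mulVec (v ∘ ⇑(eQ C t)) = 0) :=
    fun v => submatrix_mulVec_zero_iff (BX C.HX C.HZ t) (eRX C t).symm (eQ C t) v
  have hsp : ∀ v : Fin (C.N * (t+1) + C.nZ * t) → F,
      (v ∈ Submodule.span F (Set.range (balance C t).HZ) ↔
        (v ∘ ⇑(eQ C t)) ∈ Submodule.span F (Set.range (BZ C.HZ t))) :=
    fun v => submatrix_span_iff (BZ C.HZ t) (eRZ C t).symm (eQ C t) v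
  ext k
  simp only [Set.mem_setOf_eq]
  constructor
  · rintro ⟨v, h1, h2, h3⟩
    exact ⟨v ∘ ⇑(eQ C t), (hmv v).mp h1, fun hmem => h2 ((hsp v).mpr hmem),
      by rw [← h3]; exact wt_comp_equiv (eQ C t) v⟩
  · rintro ⟨u, h1, h2, h3⟩
    refine ⟨u ∘ ⇑(eQ C t).symm, ?_, ?_, ?_⟩
    · erw [hmv]
      have he : (u ∘ ⇑(eQ C t).symm) ∘ ⇑(eQ C t) = u := by funext p; simp
      erw [he]; exact h1
    · erw [hsp]
      have he : (u ∘ ⇑(eQ C t).symm) ∘ ⇑(eQ C t) = u := by funext p; simp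
      erw [he]; exact h2
    · rw [← h3]; exact wt_comp_equiv (eQ C t).symm u

end CSSCode
namespace CSSCode

open Stmt14

/-- The code with the roles of `X` and `Z` exchanged. -/
def swap (C : CSSCode) : CSSCode where
  N := C.N
  nX := C.nZ
  nZ := C.nX
  HX := C.HZ
  HZ := C.HX
  orth := by
    have h := congrArg Matrix.transpose C.orth
    rwa [Matrix.transpose_mul, Matrix.transpose_transpose, Matrix.transpose_zero] at h

lemma swap_K (C : CSSCode) : C.swap.K = C.K := by
  rw [K, K]
  have h1 : C.swap.HX.rank = C.HZ.rank := rfl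
  have h2 : C.swap.HZ.rank = C.HX.rank := rfl
  have h3 : C.swap.N = C.N := rfl
  omega

lemma dZ_set_nonempty (C : CSSCode) (hK : 1 ≤ C.K) :
    {k | ∃ v : Fin C.N → F, C.HX.mulVec v = 0 ∧
      v ∉ Submodule.span F (Set.range C.HZ) ∧ wt v = k}.Nonempty := by
  have hrank : C.HX.rank + C.HZ.rank < Fintype.card (Fin C.N) := by
    rw [Fintype.card_fin]
    have := hK
    rw [K] at this
    omega
  obtain ⟨v, h1, h2⟩ := exists_logical C.HX C.HZ C.orth hrank
  exact ⟨wt v, v, h1, h2, rfl⟩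

lemma orth' (C : CSSCode) : C.HZ * C.HX.transpose = 0 := by
  have h := congrArg Matrix.transpose C.orth
  rwa [Matrix.transpose_mul, Matrix.transpose_transpose, Matrix.transpose_zero] at h

lemma dX_set_nonempty (C : CSSCode) (hK : 1 ≤ C.K) :
    {k | ∃ v : Fin C.N → F, C.HZ.mulVec v = 0 ∧
      v ∉ Submodule.span F (Set.range C.HX) ∧ wt v = k}.Nonempty := by
  have hrank : C.HZ.rank + C.HX.rank < Fintype.card (Fin C.N) := by
    rw [Fintype.card_fin]
    have := hK
    rw [K] at this
    omega
  obtain ⟨v, h1, h2⟩ := exists_logical C.HZ C.HX (orth' C) hrank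
  exact ⟨wt v, v, h1, h2, rfl⟩

lemma dX_facts (C : CSSCode) (hK : 1 ≤ C.K) : 1 ≤ C.dX ∧ C.dX ≤ C.N := by
  have hmem := Nat.sInf_mem (dX_set_nonempty C hK)
  obtain ⟨v, h1, h2, h3⟩ := hmem
  constructor
  · rw [dX, ← h3]
    apply wt_pos_of_ne_zero
    intro hv
    exact h2 (hv ▸ Submodule.zero_mem _)
  · rw [dX, ← h3]
    exact le_trans (wt_le_card v) (by rw [Fintype.card_fin])

lemma dZ_facts (C : CSSCode) (hK : 1 ≤ C.K) : 1 ≤ C.dZ ∧ C.dZ ≤ C.N := by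
  have hmem := Nat.sInf_mem (dZ_set_nonempty C hK)
  obtain ⟨v, h1, h2, h3⟩ := hmem
  constructor
  · rw [dZ, ← h3]
    apply wt_pos_of_ne_zero
    intro hv
    exact h2 (hv ▸ Submodule.zero_mem _)
  · rw [dZ, ← h3]
    exact le_trans (wt_le_card v) (by rw [Fintype.card_fin])

lemma balance_dX_ge (C : CSSCode) (t : ℕ) (hK : 1 ≤ C.K) : C.dX ≤ (balance C t).dX := by
  have hKb : 1 ≤ (balance C t).K := by rw [balance_K]; exact hK
  have hset := balance_dX_set C t
  have hne : {k | ∃ u : ((Fin C.N × Fin (t+1)) ⊕ (Fin C.nZ × Fin t)) → F,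
      (BZ C.HZ t).mulVec u = 0 ∧ u ∉ Submodule.span F (Set.range (BX C.HX C.HZ t)) ∧ wt u = k}.Nonempty := by
    rw [← hset]
    exact dX_set_nonempty (balance C t) hKb
  have heq : (balance C t).dX = sInf {k | ∃ u : ((Fin C.N × Fin (t+1)) ⊕ (Fin C.nZ × Fin t)) → F,
      (BZ C.HZ t).mulVec u = 0 ∧ u ∉ Submodule.span F (Set.range (BX C.HX C.HZ t)) ∧ wt u = k} := by
    rw [dX, hset]
  obtain ⟨u, h1, h2, h3⟩ := Nat.sInf_mem hne
  obtain ⟨x, hx1, hx2, hx3⟩ := lemA u h1 h2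
  calc C.dX ≤ wt x := Nat.sInf_le ⟨x, hx1, hx2, rfl⟩
    _ ≤ wt u := hx3
    _ = (balance C t).dX := by rw [h3, heq]

lemma balance_dZ_ge (C : CSSCode) (t : ℕ) (hK : 1 ≤ C.K) : (t+1) * C.dZ ≤ (balance C t).dZ := by
  have hKb : 1 ≤ (balance C t).K := by rw [balance_K]; exact hK
  have hset := balance_dZ_set C t
  have hne : {k | ∃ u : ((Fin C.N × Fin (t+1)) ⊕ (Fin C.nZ × Fin t)) → F,
      (BX C.HX C.HZ t).mulVec u = 0 ∧ u ∉ Submodule.span F (Set.range (BZ C.HZ t)) ∧ wt u = k}.Nonempty := by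
    rw [← hset]
    exact dZ_set_nonempty (balance C t) hKb
  have heq : (balance C t).dZ = sInf {k | ∃ u : ((Fin C.N × Fin (t+1)) ⊕ (Fin C.nZ × Fin t)) → F,
      (BX C.HX C.HZ t).mulVec u = 0 ∧ u ∉ Submodule.span F (Set.range (BZ C.HZ t)) ∧ wt u = k} := by
    rw [dZ, hset]
  obtain ⟨u, h1, h2, h3⟩ := Nat.sInf_mem hne
  obtain ⟨hall, hsum⟩ := lemB u h1 h2
  calc (t+1) * C.dZ = ∑ _σ : Fin (t+1), C.dZ := by rw [Finset.sum_const, Finset.card_univ, Fintype.card_fin, smul_eq_mul]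
    _ ≤ ∑ σ : Fin (t+1), wt (fun j => u (.inl (j, σ))) := by
        refine Finset.sum_le_sum fun σ _ => ?_
        exact Nat.sInf_le ⟨_, (hall σ).1, (hall σ).2, rfl⟩
    _ ≤ wt u := hsum
    _ = (balance C t).dZ := by rw [h3, heq]

end CSSCode

namespace Stmt14

lemma numeric (c a μ : ℝ) (hc : 2 ≤ c) (ha : 0 < a) (hμ1 : 1 ≤ μ) (hμ2 : μ ≤ 2)
    (N nZ dX dZ N' t : ℕ)
    (hdZ1 : 1 ≤ dZ) (hdZX : dZ ≤ dX) (hdXN : dX ≤ N)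
    (ht : t = dX / dZ)
    (hN' : N' = N * (t+1) + nZ * t)
    (hnZ : (nZ : ℝ) ≤ c * N)
    (hd : a * (N:ℝ) ^ μ ≤ (dX:ℝ) * (dZ:ℝ)) :
    min 1 (a / (2 * (1+c))) * (N' : ℝ) ^ ((1:ℝ)/(3-μ)) ≤ (dX : ℝ) := by
  have hcpos : (0:ℝ) < 1 + c := by linarith
  set a' : ℝ := min 1 (a / (2 * (1+c))) with ha'
  have ha'pos : 0 < a' := lt_min one_pos (div_pos ha (by linarith))
  have ha'le1 : a' ≤ 1 := min_le_left _ _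
  have h3μpos : (0:ℝ) < 3 - μ := by linarith
  have h3μ1 : (1:ℝ) ≤ 3 - μ := by linarith
  have hepos : (0:ℝ) < 1/(3-μ) := by positivity
  have hdZpos : (0:ℝ) < dZ := by exact_mod_cast hdZ1
  have hdXpos : (0:ℝ) < dX := lt_of_lt_of_le hdZpos (by exact_mod_cast hdZX)
  have hNpos : (0:ℝ) < N := lt_of_lt_of_le hdXpos (by exact_mod_cast hdXN)
  have hdXN' : (dX:ℝ) ≤ N := by exact_mod_cast hdXN
  have hdZX' : (dZ:ℝ) ≤ dX := by exact_mod_cast hdZX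
  -- h2 : (t:ℝ) + 1 ≤ 2 * dX / dZ
  have ht1 : (t:ℝ) ≤ (dX:ℝ) / dZ := by
    rw [ht]
    exact_mod_cast Nat.cast_div_le
  have hone : (1:ℝ) ≤ (dX:ℝ) / dZ := (one_le_div hdZpos).mpr hdZX'
  have h2 : (t:ℝ) + 1 ≤ 2 * dX / dZ := by
    have : 2 * (dX:ℝ) / dZ = dX / dZ + dX / dZ := by ring
    rw [this]
    linarith
  -- h3 : N' ≤ 2 (1+c) N dX / dZ
  have h3 : (N':ℝ) ≤ 2 * (1+c) * N * dX / dZ := by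
    have hcast : (N':ℝ) = (N:ℝ) * ((t:ℝ)+1) + (nZ:ℝ) * t := by
      rw [hN']
      push_cast
      ring
    have hb1 : (N:ℝ) * ((t:ℝ)+1) + (nZ:ℝ) * t ≤ (1+c) * N * ((t:ℝ)+1) := by
      have h4 : (nZ:ℝ) * t ≤ c * N * ((t:ℝ)+1) := by
        have t0 : (0:ℝ) ≤ t := Nat.cast_nonneg t
        have : (nZ:ℝ) * t ≤ (c * N) * ((t:ℝ)+1) :=
          mul_le_mul hnZ (by linarith) t0 (by positivity)
        linarith
      nlinarith [hNpos.le]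
    have hb2 : (1+c) * (N:ℝ) * ((t:ℝ)+1) ≤ (1+c) * N * (2 * dX / dZ) := by
      have := mul_le_mul_of_nonneg_left h2 (by positivity : (0:ℝ) ≤ (1+c) * N)
      calc (1+c) * (N:ℝ) * ((t:ℝ)+1) = (1+c) * N * ((t:ℝ)+1) := rfl
        _ ≤ (1+c) * N * (2 * dX / dZ) := this
    calc (N':ℝ) = (N:ℝ) * ((t:ℝ)+1) + (nZ:ℝ) * t := hcast
      _ ≤ (1+c) * N * ((t:ℝ)+1) := hb1
      _ ≤ (1+c) * N * (2 * dX / dZ) := hb2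
      _ = 2 * (1+c) * N * dX / dZ := by ring
  -- h4 : a'^(3-μ) ≤ a / (2 (1+c))
  have h4 : a' ^ (3-μ) ≤ a / (2 * (1+c)) := by
    have := Real.rpow_le_rpow_of_exponent_ge ha'pos ha'le1 h3μ1
    rw [Real.rpow_one] at this
    exact le_trans this (min_le_right _ _)
  -- h6 : a N dX / dZ ≤ dX^(3-μ)
  have h6 : a * N * dX / dZ ≤ (dX:ℝ) ^ ((3:ℝ)-μ) := by
    have key1 : (dX:ℝ) ≤ (dX:ℝ)^((2:ℝ)-μ) * (N:ℝ)^(μ-1) := by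
      have hmono : (dX:ℝ)^(μ-1) ≤ (N:ℝ)^(μ-1) :=
        Real.rpow_le_rpow hdXpos.le hdXN' (by linarith)
      have hid : (dX:ℝ)^((2:ℝ)-μ) * (dX:ℝ)^(μ-1) = dX := by
        rw [← Real.rpow_add hdXpos]
        norm_num
      calc (dX:ℝ) = (dX:ℝ)^((2:ℝ)-μ) * (dX:ℝ)^(μ-1) := hid.symm
        _ ≤ (dX:ℝ)^((2:ℝ)-μ) * (N:ℝ)^(μ-1) :=
            mul_le_mul_of_nonneg_left hmono (Real.rpow_nonneg hdXpos.le _)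
    have key2 : a * N * dX ≤ (dX:ℝ)^((3:ℝ)-μ) * dZ := by
      have step1 : a * N * dX ≤ a * N * ((dX:ℝ)^((2:ℝ)-μ) * (N:ℝ)^(μ-1)) :=
        mul_le_mul_of_nonneg_left key1 (by positivity)
      have step2 : a * (N:ℝ) * ((dX:ℝ)^((2:ℝ)-μ) * (N:ℝ)^(μ-1))
          = (dX:ℝ)^((2:ℝ)-μ) * (a * ((N:ℝ)^(μ-1) * N)) := by ring
      have step3 : (N:ℝ)^(μ-1) * (N:ℝ) = (N:ℝ)^μ := by
        nth_rewrite 2 [show (N:ℝ) = (N:ℝ)^(1:ℝ) from (Real.rpow_one _).symm]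
        rw [← Real.rpow_add hNpos]
        norm_num
      have step4 : (dX:ℝ)^((2:ℝ)-μ) * (a * (N:ℝ)^μ) ≤ (dX:ℝ)^((2:ℝ)-μ) * ((dX:ℝ) * dZ) :=
        mul_le_mul_of_nonneg_left hd (Real.rpow_nonneg hdXpos.le _)
      have step5 : (dX:ℝ)^((2:ℝ)-μ) * ((dX:ℝ) * dZ) = (dX:ℝ)^((3:ℝ)-μ) * dZ := by
        have : (dX:ℝ)^((2:ℝ)-μ) * (dX:ℝ) = (dX:ℝ)^((3:ℝ)-μ) := by
          nth_rewrite 2 [show (dX:ℝ) = (dX:ℝ)^(1:ℝ) from (Real.rpow_one _).symm]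
          rw [← Real.rpow_add hdXpos]
          congr 1
          ring
        calc (dX:ℝ)^((2:ℝ)-μ) * ((dX:ℝ) * dZ) = ((dX:ℝ)^((2:ℝ)-μ) * (dX:ℝ)) * dZ := by ring
          _ = (dX:ℝ)^((3:ℝ)-μ) * dZ := by rw [this]
      calc a * (N:ℝ) * (dX:ℝ) ≤ (dX:ℝ)^((2:ℝ)-μ) * (a * ((N:ℝ)^(μ-1) * N)) := by
            rw [← step2]; exact step1
        _ = (dX:ℝ)^((2:ℝ)-μ) * (a * (N:ℝ)^μ) := by rw [step3]
        _ ≤ (dX:ℝ)^((2:ℝ)-μ) * ((dX:ℝ) * dZ) := step4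
        _ = (dX:ℝ)^((3:ℝ)-μ) * dZ := step5
    rw [div_le_iff₀ hdZpos]
    exact key2
  -- h7 : a'^(3-μ) * N' ≤ dX^(3-μ)
  have h7 : a' ^ ((3:ℝ)-μ) * (N':ℝ) ≤ (dX:ℝ) ^ ((3:ℝ)-μ) := by
    have hstep : a' ^ ((3:ℝ)-μ) * (N':ℝ) ≤ (a / (2*(1+c))) * (2 * (1+c) * N * dX / dZ) :=
      mul_le_mul h4 h3 (Nat.cast_nonneg N') (by positivity)
    have heq2 : (a / (2*(1+c))) * (2 * (1+c) * (N:ℝ) * dX / dZ) = a * N * dX / dZ := by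
      field_simp
    rw [heq2] at hstep
    exact le_trans hstep h6
  -- conclude
  have hfin : a' * (N':ℝ) ^ ((1:ℝ)/(3-μ)) = (a' ^ ((3:ℝ)-μ) * (N':ℝ)) ^ ((1:ℝ)/(3-μ)) := by
    rw [Real.mul_rpow (Real.rpow_nonneg ha'pos.le _) (Nat.cast_nonneg N'),
      ← Real.rpow_mul ha'pos.le, mul_one_div, div_self (ne_of_gt h3μpos), Real.rpow_one]
  rw [hfin]
  have hlast := Real.rpow_le_rpow (by positivity) h7 hepos.le
  refine le_trans hlast (le_of_eq ?_)
  rw [← Real.rpow_mul hdXpos.le, mul_one_div, div_self (ne_of_gt h3μpos), Real.rpow_one]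

lemma core (c a μ : ℝ) (hc : 2 ≤ c) (ha : 0 < a) (hμ1 : 1 ≤ μ) (hμ2 : μ ≤ 2)
    (D : CSSCode) (hK : 1 ≤ D.K)
    (hwX : (D.wX : ℝ) ≤ c) (hwZ : (D.wZ : ℝ) ≤ c) (hqX : (D.qX : ℝ) ≤ c) (hqZ : (D.qZ : ℝ) ≤ c)
    (hnZ : (D.nZ : ℝ) ≤ c * D.N)
    (hd : a * (D.N : ℝ) ^ μ ≤ (D.dX : ℝ) * (D.dZ : ℝ))
    (hcmp : D.dZ ≤ D.dX) :
    ∃ C' : CSSCode, C'.K = D.K ∧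
      (C'.wX : ℝ) ≤ c + 2 ∧ (C'.wZ : ℝ) ≤ c + 2 ∧ (C'.qX : ℝ) ≤ c + 2 ∧ (C'.qZ : ℝ) ≤ c + 2 ∧
      min 1 (a / (2 * (1+c))) * (C'.N : ℝ) ^ ((1 : ℝ) / (3 - μ)) ≤ ((min C'.dX C'.dZ : ℕ) : ℝ) := by
  obtain ⟨hdX1, hdXN⟩ := D.dX_facts hK
  obtain ⟨hdZ1, hdZN⟩ := D.dZ_facts hK
  set t : ℕ := D.dX / D.dZ with htdef
  refine ⟨D.balance t, D.balance_K t, ?_, ?_, ?_, ?_, ?_⟩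
  · have h := D.balance_wX t
    have hcast : ((D.balance t).wX : ℝ) ≤ ((max (D.qZ + 2) D.wX : ℕ) : ℝ) := by exact_mod_cast h
    refine le_trans hcast ?_
    rw [Nat.cast_max]
    refine max_le ?_ (by linarith)
    push_cast
    linarith
  · have h := D.balance_wZ t
    have hcast : ((D.balance t).wZ : ℝ) ≤ ((D.wZ + 2 : ℕ) : ℝ) := by exact_mod_cast h
    refine le_trans hcast ?_
    push_cast
    linarith
  · have h := D.balance_qX t
    have hcast : ((D.balance t).qX : ℝ) ≤ ((max (D.qX + 2) D.wZ : ℕ) : ℝ) := by exact_mod_cast h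
    refine le_trans hcast ?_
    rw [Nat.cast_max]
    refine max_le ?_ (by linarith)
    push_cast
    linarith
  · have h := D.balance_qZ t
    have hcast : ((D.balance t).qZ : ℝ) ≤ ((max D.qZ 2 : ℕ) : ℝ) := by exact_mod_cast h
    refine le_trans hcast ?_
    rw [Nat.cast_max]
    refine max_le (by linarith) ?_
    push_cast
    linarith
  · -- the distance bound
    have hdX' : D.dX ≤ (D.balance t).dX := D.balance_dX_ge t hK
    have hdZ' : (t+1) * D.dZ ≤ (D.balance t).dZ := D.balance_dZ_ge t hK
    have hdXt : D.dX ≤ (t+1) * D.dZ := by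
      have hmod := Nat.div_add_mod D.dX D.dZ
      have hlt := Nat.mod_lt D.dX (show 0 < D.dZ by omega)
      rw [htdef]
      nlinarith [hmod, hlt]
    have hmin : D.dX ≤ min (D.balance t).dX (D.balance t).dZ :=
      le_min hdX' (le_trans hdXt hdZ')
    have hnum := numeric c a μ hc ha hμ1 hμ2 D.N D.nZ D.dX D.dZ ((D.balance t).N) t
      hdZ1 hcmp hdXN htdef (D.balance_N t) hnZ hd
    refine le_trans hnum ?_
    exact_mod_cast hmin

end Stmt14

/-- For all reals `c ≥ 2`, `a > 0` and `1 ≤ μ ≤ 2` there is a constant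
`a′ > 0` such that: every CSS code `C` with `K ≥ 1`, `w_X, w_Z, q_X, q_Z ≤ c`,
`n_X ≤ c·N`, `n_Z ≤ c·N` and `d_X·d_Z ≥ a·N^μ` admits a CSS code `C̃` with `K̃ = K`,
`w̃_X, w̃_Z, q̃_X, q̃_Z ≤ c+2`, and `min(d̃_X, d̃_Z) ≥ a′·Ñ^{1/(3−μ)}`. -/
theorem stmt14 (c a μ : ℝ) (hc : 2 ≤ c) (ha : 0 < a) (hμ1 : 1 ≤ μ) (hμ2 : μ ≤ 2) :
    ∃ a' : ℝ, 0 < a' ∧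
      ∀ C : CSSCode, 1 ≤ C.K →
        (C.wX : ℝ) ≤ c → (C.wZ : ℝ) ≤ c → (C.qX : ℝ) ≤ c → (C.qZ : ℝ) ≤ c →
        (C.nX : ℝ) ≤ c * C.N → (C.nZ : ℝ) ≤ c * C.N →
        a * (C.N : ℝ) ^ μ ≤ (C.dX : ℝ) * (C.dZ : ℝ) →
        ∃ C' : CSSCode, C'.K = C.K ∧
          (C'.wX : ℝ) ≤ c + 2 ∧ (C'.wZ : ℝ) ≤ c + 2 ∧
          (C'.qX : ℝ) ≤ c + 2 ∧ (C'.qZ : ℝ) ≤ c + 2 ∧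
          a' * (C'.N : ℝ) ^ ((1 : ℝ) / (3 - μ)) ≤ ((min C'.dX C'.dZ : ℕ) : ℝ) := by
  refine ⟨min 1 (a / (2 * (1+c))), lt_min one_pos (div_pos ha (by linarith)), ?_⟩
  intro C hK hwX hwZ hqX hqZ hnX hnZ hd
  rcases le_or_gt C.dZ C.dX with hcmp | hcmp
  · exact Stmt14.core c a μ hc ha hμ1 hμ2 C hK hwX hwZ hqX hqZ hnZ hd hcmp
  · have hKs : 1 ≤ C.swap.K := by rw [CSSCode.swap_K]; exact hK
    have hds : a * (C.swap.N : ℝ) ^ μ ≤ (C.swap.dX : ℝ) * (C.swap.dZ : ℝ) := by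
      have h1 : C.swap.dX = C.dZ := rfl
      have h2 : C.swap.dZ = C.dX := rfl
      have h3 : C.swap.N = C.N := rfl
      rw [h1, h2, h3]
      linarith [hd]
    have hcs : C.swap.dZ ≤ C.swap.dX := le_of_lt hcmp
    obtain ⟨C', hK', hb⟩ := Stmt14.core c a μ hc ha hμ1 hμ2 C.swap hKs hwZ hwX hqZ hqX hnX hds hcs
    exact ⟨C', by rw [hK', CSSCode.swap_K], hb⟩
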